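/- arXiv:2008.06850 — 2 statements merged into one kernel-verified Lean document; each statement's English description precedes it below -/
import Mathlib

section
/- Let A be a Perron-like real m×m matrix with principal eigenvalue s, Π₁ the spectral projection onto GE_s(A), and V a nonsingular real m×m matrix with ‖V‖ = 1; set Y = Π₁V and X_n(t) = Σ_{k=0}^n (t^k/k!)·A^k·V. Then there exist constants κ, B₀, δ > 0 such that for every n ∈ ℕ and every t ≥ 1 with X_n(t) ≠ 0: ‖ X_n(t)/‖X_n(t)‖ − e^{t(A−sI)}Y/‖e^{t(A−sI)}Y‖ ‖ ≤ B₀·e^{−δt} + (2/κ)·((t‖A‖)^{n+1}/(n+1)!)·e^{2‖A‖t}. -/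
open Matrix

/-- Matrix exponential of a real square matrix. -/
noncomputable def mexp {m : ℕ} (M : Matrix (Fin m) (Fin m) ℝ) : Matrix (Fin m) (Fin m) ℝ :=
  NormedSpace.exp M

/-- Frobenius norm of a real square matrix. -/
noncomputable def fnorm {m : ℕ} (M : Matrix (Fin m) (Fin m) ℝ) : ℝ :=
  Real.sqrt (∑ i, ∑ j, (M i j) ^ 2)

/-- Euclidean norm of a vector in ℝ^m. -/
noncomputable def vnorm {m : ℕ} (x : Fin m → ℝ) : ℝ :=
  Real.sqrt (∑ i, (x i) ^ 2)

/-- Frobenius inner product ⟨M, N⟩ = trace(Mᵀ N). -/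
def finner {m : ℕ} (M N : Matrix (Fin m) (Fin m) ℝ) : ℝ :=
  ∑ i, ∑ j, M i j * N i j

/-- The generalized eigenspace GE_s(A) = {x : (A - s•I)^k x = 0 for some k ≥ 1},
as a submodule of ℝ^m. -/
def GEsub {m : ℕ} (A : Matrix (Fin m) (Fin m) ℝ) (s : ℝ) : Submodule ℝ (Fin m → ℝ) where
  carrier := {x | ∃ k : ℕ, 1 ≤ k ∧ ((A - s • 1) ^ k).mulVec x = 0}
  zero_mem' := ⟨1, le_refl 1, Matrix.mulVec_zero _⟩
  add_mem' := by
    rintro a b ⟨k, hk, ha⟩ ⟨l, hl, hb⟩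
    refine ⟨max k l, le_trans hk (le_max_left _ _), ?_⟩
    have h1 : ((A - s • 1) ^ (max k l)).mulVec a = 0 := by
      have h : (A - s • 1) ^ (max k l) = (A - s • 1) ^ (max k l - k) * (A - s • 1) ^ k := by
        rw [← pow_add]; congr 1; omega
      rw [h, ← Matrix.mulVec_mulVec, ha, Matrix.mulVec_zero]
    have h2 : ((A - s • 1) ^ (max k l)).mulVec b = 0 := by
      have h : (A - s • 1) ^ (max k l) = (A - s • 1) ^ (max k l - l) * (A - s • 1) ^ l := by
        rw [← pow_add]; congr 1; omega
      rw [h, ← Matrix.mulVec_mulVec, hb, Matrix.mulVec_zero]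
    rw [Matrix.mulVec_add, h1, h2, add_zero]
  smul_mem' := by
    rintro c a ⟨k, hk, ha⟩
    exact ⟨k, hk, by rw [Matrix.mulVec_smul, ha, smul_zero]⟩

/-- Partial sum X_n(t) = ∑_{k=0}^n (t^k/k!) A^k V is `texp A n t * V` where -/
noncomputable def texp {m : ℕ} (A : Matrix (Fin m) (Fin m) ℝ) (n : ℕ) (t : ℝ) :
    Matrix (Fin m) (Fin m) ℝ :=
  ∑ k ∈ Finset.range (n + 1), (t ^ k / (Nat.factorial k : ℝ)) • A ^ k


/-! ### Auxiliary lemmas -/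

section AuxAlgebra

variable {𝔸 : Type*} [NormedRing 𝔸] [NormedAlgebra ℝ 𝔸] [CompleteSpace 𝔸]

private lemma aux_norm_pow_mul_le (N X : 𝔸) : ∀ k : ℕ, ‖N ^ k * X‖ ≤ ‖N‖ ^ k * ‖X‖
  | 0 => by simp
  | (k + 1) => by
      have h1 : N ^ (k + 1) * X = N * (N ^ k * X) := by rw [pow_succ', mul_assoc]
      calc ‖N ^ (k + 1) * X‖ ≤ ‖N‖ * ‖N ^ k * X‖ := h1 ▸ norm_mul_le _ _
        _ ≤ ‖N‖ * (‖N‖ ^ k * ‖X‖) :=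
            mul_le_mul_of_nonneg_left (aux_norm_pow_mul_le N X k) (norm_nonneg N)
        _ = ‖N‖ ^ (k + 1) * ‖X‖ := by ring

private lemma aux_term_le (N X : 𝔸) (k : ℕ) :
    ‖((k.factorial : ℝ))⁻¹ • (N ^ k * X)‖ ≤ ‖N‖ ^ k / (k.factorial : ℝ) * ‖X‖ := by
  rw [norm_smul, Real.norm_eq_abs, abs_of_nonneg (by positivity)]
  calc ((k.factorial : ℝ))⁻¹ * ‖N ^ k * X‖ ≤ ((k.factorial : ℝ))⁻¹ * (‖N‖ ^ k * ‖X‖) :=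
        mul_le_mul_of_nonneg_left (aux_norm_pow_mul_le N X k) (by positivity)
    _ = ‖N‖ ^ k / (k.factorial : ℝ) * ‖X‖ := by
        rw [div_eq_inv_mul]; ring

private lemma aux_summable (N X : 𝔸) :
    Summable fun k : ℕ => ‖((k.factorial : ℝ))⁻¹ • (N ^ k * X)‖ :=
  Summable.of_nonneg_of_le (fun _ => norm_nonneg _) (fun k => aux_term_le N X k)
    ((Real.summable_pow_div_factorial ‖N‖).mul_right ‖X‖)

private lemma aux_exp_mul (N X : 𝔸) :
    NormedSpace.exp N * X = ∑' k : ℕ, ((k.factorial : ℝ))⁻¹ • (N ^ k * X) := by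
  have h := congrFun (NormedSpace.exp_eq_tsum (𝕂 := ℝ) (𝔸 := 𝔸)) N
  rw [h]
  exact ((NormedSpace.expSeries_summable' (𝕂 := ℝ) N).tsum_mul_right X).symm.trans
    (tsum_congr fun k => smul_mul_assoc _ _ _)

private lemma aux_real_exp (x : ℝ) :
    ∑' k : ℕ, x ^ k / (k.factorial : ℝ) = Real.exp x := by
  rw [Real.exp_eq_exp_ℝ, NormedSpace.exp_eq_tsum_div]

private lemma aux_norm_exp_mul_le (N X : 𝔸) :
    ‖NormedSpace.exp N * X‖ ≤ Real.exp ‖N‖ * ‖X‖ := by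
  rw [aux_exp_mul]
  refine (norm_tsum_le_tsum_norm (aux_summable N X)).trans ?_
  calc (∑' k : ℕ, ‖((k.factorial : ℝ))⁻¹ • (N ^ k * X)‖)
      ≤ ∑' k : ℕ, ‖N‖ ^ k / (k.factorial : ℝ) * ‖X‖ :=
        Summable.tsum_le_tsum (aux_term_le N X) (aux_summable N X)
          ((Real.summable_pow_div_factorial ‖N‖).mul_right ‖X‖)
    _ = Real.exp ‖N‖ * ‖X‖ := by rw [tsum_mul_right, aux_real_exp]

private lemma aux_exp_trunc (N X : 𝔸) (d : ℕ) (h : N ^ d * X = 0) (t : ℝ) :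
    NormedSpace.exp (t • N) * X
      = ∑ j ∈ Finset.range d, (t ^ j / (j.factorial : ℝ)) • (N ^ j * X) := by
  rw [aux_exp_mul]
  rw [tsum_eq_sum (s := Finset.range d) ?_]
  · refine Finset.sum_congr rfl fun j _ => ?_
    rw [smul_pow, smul_mul_assoc, smul_smul]
    congr 1
    rw [div_eq_mul_inv, mul_comm]
  · intro j hj
    have hd : d ≤ j := le_of_not_gt fun h' => hj (Finset.mem_range.mpr h')
    have hz : N ^ j * X = 0 := by
      rw [show j = (j - d) + d by omega, pow_add, mul_assoc, h, mul_zero]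
    rw [smul_pow, smul_mul_assoc, hz, smul_zero, smul_zero]

private lemma aux_tail (x : ℝ) (hx : 0 ≤ x) (n : ℕ) :
    ∑' j : ℕ, x ^ (j + (n + 1)) / (((j + (n + 1)).factorial : ℝ))
      ≤ x ^ (n + 1) / (((n + 1).factorial : ℝ)) * Real.exp x := by
  have hsum : Summable fun j : ℕ => x ^ (j + (n + 1)) / ((j + (n + 1)).factorial : ℝ) :=
    (Real.summable_pow_div_factorial x).comp_injective (add_left_injective (n + 1))
  have hterm : ∀ j : ℕ, x ^ (j + (n + 1)) / ((j + (n + 1)).factorial : ℝ)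
      ≤ x ^ (n + 1) / (((n + 1).factorial : ℝ)) * (x ^ j / (j.factorial : ℝ)) := by
    intro j
    have hfac : ((n + 1).factorial : ℝ) * (j.factorial : ℝ) ≤ ((j + (n + 1)).factorial : ℝ) := by
      have := Nat.factorial_mul_factorial_dvd_factorial_add (n + 1) j
      rw [show j + (n + 1) = (n + 1) + j by omega]
      exact_mod_cast Nat.le_of_dvd (Nat.factorial_pos _) this
    have h1 : x ^ (j + (n + 1)) / ((j + (n + 1)).factorial : ℝ)
        ≤ x ^ (j + (n + 1)) / (((n + 1).factorial : ℝ) * (j.factorial : ℝ)) := by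
      apply div_le_div_of_nonneg_left (by positivity) (by positivity) hfac
    refine h1.trans_eq ?_
    rw [pow_add, mul_comm (x ^ j)]
    field_simp
  calc (∑' j : ℕ, x ^ (j + (n + 1)) / ((j + (n + 1)).factorial : ℝ))
      ≤ ∑' j : ℕ, x ^ (n + 1) / (((n + 1).factorial : ℝ)) * (x ^ j / (j.factorial : ℝ)) :=
        Summable.tsum_le_tsum hterm hsum ((Real.summable_pow_div_factorial x).mul_left _)
    _ = x ^ (n + 1) / (((n + 1).factorial : ℝ)) * Real.exp x := by
        rw [tsum_mul_left, aux_real_exp]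

private lemma aux_remainder (N X : 𝔸) (hX : ‖X‖ ≤ 1) (n : ℕ) :
    ‖NormedSpace.exp N * X - ∑ k ∈ Finset.range (n + 1), ((k.factorial : ℝ))⁻¹ • (N ^ k * X)‖
      ≤ ‖N‖ ^ (n + 1) / (((n + 1).factorial : ℝ)) * Real.exp ‖N‖ := by
  have hsum : Summable fun k : ℕ => ((k.factorial : ℝ))⁻¹ • (N ^ k * X) :=
    (aux_summable N X).of_norm
  have hsplit := Summable.sum_add_tsum_nat_add (f := fun k : ℕ => ((k.factorial : ℝ))⁻¹ • (N ^ k * X))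
    (n + 1) hsum
  rw [aux_exp_mul, ← hsplit, add_sub_cancel_left]
  have hns : Summable fun j : ℕ =>
      ‖(((j + (n + 1)).factorial : ℝ))⁻¹ • (N ^ (j + (n + 1)) * X)‖ :=
    (aux_summable N X).comp_injective (add_left_injective (n + 1))
  refine (norm_tsum_le_tsum_norm hns).trans ?_
  have hterm : ∀ j : ℕ, ‖(((j + (n + 1)).factorial : ℝ))⁻¹ • (N ^ (j + (n + 1)) * X)‖
      ≤ ‖N‖ ^ (j + (n + 1)) / (((j + (n + 1)).factorial : ℝ)) := by
    intro j
    refine (aux_term_le N X _).trans ?_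
    calc ‖N‖ ^ (j + (n + 1)) / (((j + (n + 1)).factorial : ℝ)) * ‖X‖
        ≤ ‖N‖ ^ (j + (n + 1)) / (((j + (n + 1)).factorial : ℝ)) * 1 := by
          exact mul_le_mul_of_nonneg_left hX (by positivity)
      _ = _ := mul_one _
  refine (Summable.tsum_le_tsum hterm hns ?_).trans (aux_tail ‖N‖ (norm_nonneg N) n)
  exact (Real.summable_pow_div_factorial ‖N‖).comp_injective (add_left_injective (n + 1))

private lemma aux_poly_le_exp (δ t : ℝ) (hδ : 0 < δ) (ht : 0 ≤ t) (j : ℕ) :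
    t ^ j ≤ (j.factorial : ℝ) / δ ^ j * Real.exp (δ * t) := by
  have h1 : (δ * t) ^ j / (j.factorial : ℝ) ≤ Real.exp (δ * t) := by
    have := Real.sum_le_exp_of_nonneg (x := δ * t) (by positivity) (j + 1)
    refine le_trans ?_ this
    exact Finset.single_le_sum (f := fun i => (δ * t) ^ i / (i.factorial : ℝ))
      (fun i _ => by positivity) (Finset.self_mem_range_succ j)
  have hδj : (0:ℝ) < δ ^ j := by positivity
  have hfj : (0:ℝ) < (j.factorial : ℝ) := by positivity
  rw [mul_pow] at h1
  rw [div_le_iff₀ hfj] at h1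
  calc t ^ j = δ ^ j * t ^ j / δ ^ j := by field_simp
    _ ≤ Real.exp (δ * t) * (j.factorial : ℝ) / δ ^ j := by gcongr
    _ = (j.factorial : ℝ) / δ ^ j * Real.exp (δ * t) := by ring

private lemma aux_normalize {E : Type*} [NormedAddCommGroup E] [NormedSpace ℝ E]
    (u v : E) (hu : u ≠ 0) (hv : v ≠ 0) :
    ‖‖u‖⁻¹ • u - ‖v‖⁻¹ • v‖ ≤ 2 * ‖u - v‖ / ‖v‖ := by
  have hun : (0:ℝ) < ‖u‖ := norm_pos_iff.mpr hu
  have hvn : (0:ℝ) < ‖v‖ := norm_pos_iff.mpr hv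
  have hid : ‖u‖⁻¹ • u - ‖v‖⁻¹ • v = ‖v‖⁻¹ • (u - v) + (‖u‖⁻¹ - ‖v‖⁻¹) • u := by
    rw [smul_sub, sub_smul]; abel
  rw [hid]
  have h1 : ‖‖v‖⁻¹ • (u - v)‖ = ‖u - v‖ / ‖v‖ := by
    rw [norm_smul, Real.norm_eq_abs, abs_of_pos (inv_pos.mpr hvn), div_eq_inv_mul]
  have h2 : ‖(‖u‖⁻¹ - ‖v‖⁻¹) • u‖ ≤ ‖u - v‖ / ‖v‖ := by
    rw [norm_smul, Real.norm_eq_abs]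
    have he : ‖u‖⁻¹ - ‖v‖⁻¹ = (‖v‖ - ‖u‖) / (‖u‖ * ‖v‖) := by field_simp
    rw [he, abs_div, abs_of_pos (by positivity : (0:ℝ) < ‖u‖ * ‖v‖)]
    have habs : |‖v‖ - ‖u‖| ≤ ‖u - v‖ := by
      rw [abs_sub_comm]; exact abs_norm_sub_norm_le u v
    calc |‖v‖ - ‖u‖| / (‖u‖ * ‖v‖) * ‖u‖ = |‖v‖ - ‖u‖| / ‖v‖ := by
          field_simp
      _ ≤ ‖u - v‖ / ‖v‖ := by gcongr
  calc ‖‖v‖⁻¹ • (u - v) + (‖u‖⁻¹ - ‖v‖⁻¹) • u‖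
      ≤ ‖‖v‖⁻¹ • (u - v)‖ + ‖(‖u‖⁻¹ - ‖v‖⁻¹) • u‖ := norm_add_le _ _
    _ ≤ ‖u - v‖ / ‖v‖ + ‖u - v‖ / ‖v‖ := by rw [h1]; gcongr
    _ = 2 * ‖u - v‖ / ‖v‖ := by ring

private lemma aux_normalize_smul {E : Type*} [NormedAddCommGroup E] [NormedSpace ℝ E]
    (c : ℝ) (hc : 0 < c) (v : E) : ‖c • v‖⁻¹ • (c • v) = ‖v‖⁻¹ • v := by
  rw [norm_smul, Real.norm_eq_abs, abs_of_pos hc, smul_smul, mul_inv]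
  rw [mul_comm c⁻¹, mul_assoc, inv_mul_cancel₀ hc.ne', mul_one]

end AuxAlgebra

section MatrixAux

set_option maxHeartbeats 1600000

attribute [local instance] Matrix.frobeniusNormedAddCommGroup Matrix.frobeniusNormedSpace
  Matrix.frobeniusNormedRing Matrix.frobeniusNormedAlgebra Matrix.frobeniusIsBoundedSMul

variable {m : ℕ}

private lemma cR : CompleteSpace (Matrix (Fin m) (Fin m) ℝ) :=
  FiniteDimensional.complete ℝ _

private lemma cC : CompleteSpace (Matrix (Fin m) (Fin m) ℂ) :=
  FiniteDimensional.complete ℂ _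

attribute [local instance] cR cC

private lemma fnorm_eq_norm (M : Matrix (Fin m) (Fin m) ℝ) : fnorm M = ‖M‖ := by
  rw [fnorm, Matrix.frobenius_norm_def, Real.sqrt_eq_rpow]
  congr 1
  refine Finset.sum_congr rfl fun i _ => Finset.sum_congr rfl fun j _ => ?_
  rw [Real.norm_eq_abs, show (2:ℝ) = ((2:ℕ):ℝ) by norm_num, Real.rpow_natCast, sq_abs]

private lemma mexp_eq (X : Matrix (Fin m) (Fin m) ℝ) : mexp X = NormedSpace.exp X := rfl

private lemma texp_mul (A V : Matrix (Fin m) (Fin m) ℝ) (n : ℕ) (t : ℝ) :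
    texp A n t * V = ∑ k ∈ Finset.range (n + 1), ((k.factorial : ℝ))⁻¹ • ((t • A) ^ k * V) := by
  rw [texp, Finset.sum_mul]
  refine Finset.sum_congr rfl fun k _ => ?_
  rw [smul_mul_assoc, smul_pow, smul_mul_assoc, smul_smul]
  congr 1
  rw [div_eq_mul_inv, mul_comm]

private lemma exp_scalar (c : ℝ) :
    NormedSpace.exp (c • (1 : Matrix (Fin m) (Fin m) ℝ)) = Real.exp c • 1 := by
  erw [← Algebra.algebraMap_eq_smul_one, ← NormedSpace.algebraMap_exp_comm, ← Real.exp_eq_exp_ℝ,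
    Algebra.algebraMap_eq_smul_one]

private lemma exp_scalar_c (c : ℂ) :
    NormedSpace.exp (c • (1 : Matrix (Fin m) (Fin m) ℂ)) = Complex.exp c • 1 := by
  erw [← Algebra.algebraMap_eq_smul_one, ← NormedSpace.algebraMap_exp_comm, ← Complex.exp_eq_exp_ℂ,
    Algebra.algebraMap_eq_smul_one]

private lemma exp_shift (A : Matrix (Fin m) (Fin m) ℝ) (s t : ℝ) :
    NormedSpace.exp (t • A)
      = Real.exp (t * s) • NormedSpace.exp (t • (A - s • 1)) := by
  have hsplit : t • A = (t * s) • (1 : Matrix (Fin m) (Fin m) ℝ) + t • (A - s • 1) := by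
    rw [smul_sub, smul_smul]; abel
  have hcomm : Commute ((t * s) • (1 : Matrix (Fin m) (Fin m) ℝ)) (t • (A - s • 1)) :=
    ((Commute.one_left (A - s • 1)).smul_left (t * s)).smul_right t
  rw [hsplit, Matrix.exp_add_of_commute _ _ hcomm, exp_scalar, smul_mul_assoc, one_mul]

private lemma pow_mul_P (A P : Matrix (Fin m) (Fin m) ℝ) (s : ℝ)
    (hPrange : Set.range P.mulVec = (GEsub A s : Set (Fin m → ℝ))) :
    (A - s • 1) ^ m * P = 0 := by
  have hmem : ∀ x, P.mulVec x ∈ (GEsub A s : Set (Fin m → ℝ)) := by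
    intro x; rw [← hPrange]; exact Set.mem_range_self x
  have key : ∀ x, ((A - s • 1) ^ m).mulVec (P.mulVec x) = 0 := by
    intro x
    obtain ⟨k, -, hk⟩ := hmem x
    by_cases hkm : k ≤ m
    · have h : (A - s • 1) ^ m = (A - s • 1) ^ (m - k) * (A - s • 1) ^ k := by
        rw [← pow_add]; congr 1; omega
      rw [h, ← Matrix.mulVec_mulVec, hk, Matrix.mulVec_zero]
    · set f : Module.End ℝ (Fin m → ℝ) := Matrix.toLinAlgEquiv' (A - s • 1) with hf
      have hfp : ∀ (j : ℕ) (y : Fin m → ℝ), (f ^ j) y = ((A - s • 1) ^ j).mulVec y := by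
        intro j y
        rw [hf, ← map_pow]
        rfl
      have hk' : P.mulVec x ∈ LinearMap.ker (f ^ k) := by
        rw [LinearMap.mem_ker, hfp]; exact hk
      have hmk : m ≤ k := le_of_not_ge hkm
      have hker := Module.End.ker_pow_eq_ker_pow_finrank_of_le (K := ℝ) (V := Fin m → ℝ)
        (f := f) (m := k) (by rw [Module.finrank_fin_fun]; exact hmk)
      have hker2 := Module.End.ker_pow_eq_ker_pow_finrank_of_le (K := ℝ) (V := Fin m → ℝ)
        (f := f) (m := m) (le_of_eq (Module.finrank_fin_fun ℝ))
      rw [hker, ← hker2, LinearMap.mem_ker, hfp] at hk'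
      exact hk'
  ext i j
  have h := key (Pi.single j 1)
  rw [Matrix.mulVec_mulVec] at h
  simpa [Matrix.mulVec_single] using congrFun h i

private lemma PV_ne_zero (A P V : Matrix (Fin m) (Fin m) ℝ) (s : ℝ)
    (hs : s ∈ spectrum ℝ A) (hPidem : P * P = P)
    (hPrange : Set.range P.mulVec = (GEsub A s : Set (Fin m → ℝ)))
    (hV : IsUnit V) : P * V ≠ 0 := by
  have hns : ¬ IsUnit (s • (1 : Matrix (Fin m) (Fin m) ℝ) - A) := by
    have h := spectrum.mem_iff.mp hs
    rwa [Algebra.algebraMap_eq_smul_one] at h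
  have hdet : (s • (1 : Matrix (Fin m) (Fin m) ℝ) - A).det = 0 := by
    by_contra hd
    exact hns ((Matrix.isUnit_iff_isUnit_det _).mpr (isUnit_iff_ne_zero.mpr hd))
  obtain ⟨v, hv0, hv⟩ := (Matrix.exists_mulVec_eq_zero_iff).mpr hdet
  have hvGE : v ∈ (GEsub A s : Set (Fin m → ℝ)) := by
    refine ⟨1, le_refl 1, ?_⟩
    rw [pow_one]
    have h : (A - s • 1).mulVec v = -((s • 1 - A).mulVec v) := by
      rw [← Matrix.neg_mulVec, neg_sub]
    rw [h, hv, neg_zero]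
  have hPv : P.mulVec v = v := by
    rw [← hPrange] at hvGE
    obtain ⟨y, hy⟩ := hvGE
    rw [← hy, Matrix.mulVec_mulVec, hPidem]
  intro hPV
  obtain ⟨B, hB⟩ := hV.exists_right_inv
  have hP0 : P = 0 := by
    calc P = P * (V * B) := by rw [hB, mul_one]
      _ = (P * V) * B := by rw [mul_assoc]
      _ = 0 := by rw [hPV, zero_mul]
  rw [hP0, Matrix.zero_mulVec] at hPv
  exact hv0 hPv.symm

private lemma subsing_zero : Subsingleton (Matrix (Fin 0) (Fin 0) ℝ) :=
  ⟨fun a b => by ext i j; exact i.elim0⟩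

private lemma kappa_bound (A P V : Matrix (Fin m) (Fin m) ℝ) (s : ℝ)
    (hPV : P * V ≠ 0) (hMP : (A - s • 1) ^ m * P = 0) :
    ∃ κ : ℝ, 0 < κ ∧ ∀ t : ℝ, 1 ≤ t →
      κ ≤ ‖NormedSpace.exp (t • (A - s • 1)) * (P * V)‖ := by
  classical
  set M := A - s • 1 with hM
  set C : ℕ → Matrix (Fin m) (Fin m) ℝ := fun k => M ^ k * (P * V) with hC
  have hMPV : M ^ m * (P * V) = 0 := by rw [← mul_assoc, hMP, zero_mul]
  have hq : ∀ t : ℝ, NormedSpace.exp (t • M) * (P * V)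
      = ∑ k ∈ Finset.range m, (t ^ k / (k.factorial : ℝ)) • C k :=
    fun t => aux_exp_trunc M (P * V) m hMPV t
  have hqne : ∀ t : ℝ, NormedSpace.exp (t • M) * (P * V) ≠ 0 := by
    intro t h0
    obtain ⟨u, hu⟩ := Matrix.isUnit_exp (t • M)
    apply hPV
    calc P * V = (u⁻¹ : (Matrix (Fin m) (Fin m) ℝ)ˣ) * ((u : Matrix (Fin m) (Fin m) ℝ) * (P * V)) := by
          rw [← mul_assoc, Units.inv_mul, one_mul]
      _ = (u⁻¹ : (Matrix (Fin m) (Fin m) ℝ)ˣ) * (NormedSpace.exp (t • M) * (P * V)) := by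
          rw [hu]
      _ = 0 := by rw [h0, mul_zero]
  have h0S : C 0 ≠ 0 := by simpa [hC] using hPV
  have hm0 : 0 < m := by
    rcases Nat.eq_zero_or_pos m with rfl | h
    · haveI := subsing_zero
      exact absurd (Subsingleton.elim (P * V) 0) hPV
    · exact h
  set S := (Finset.range m).filter (fun k => C k ≠ 0) with hS
  have hSne : S.Nonempty := ⟨0, Finset.mem_filter.mpr ⟨Finset.mem_range.mpr hm0, h0S⟩⟩
  set d := S.max' hSne with hd
  have hdS : d ∈ S := S.max'_mem hSne
  have hdm : d < m := Finset.mem_range.mp (Finset.mem_filter.mp hdS).1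
  have hCd : C d ≠ 0 := (Finset.mem_filter.mp hdS).2
  have hzero : ∀ k, k < m → d < k → C k = 0 := by
    intro k hkm hdk
    by_contra hne
    exact absurd (Finset.le_max' S k (Finset.mem_filter.mpr
      ⟨Finset.mem_range.mpr hkm, hne⟩)) (not_le.mpr hdk)
  set a := ‖C d‖ / (d.factorial : ℝ) with ha
  have ha0 : 0 < a := div_pos (norm_pos_iff.mpr hCd) (by positivity)
  set b := ∑ k ∈ Finset.range d, ‖C k‖ / (k.factorial : ℝ) with hb
  have hb0 : 0 ≤ b := Finset.sum_nonneg fun k _ => by positivity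
  have hq' : ∀ t : ℝ, NormedSpace.exp (t • M) * (P * V)
      = (t ^ d / (d.factorial : ℝ)) • C d
        + ∑ k ∈ Finset.range d, (t ^ k / (k.factorial : ℝ)) • C k := by
    intro t
    rw [hq]
    have hsub : ∑ k ∈ Finset.range m, (t ^ k / (k.factorial : ℝ)) • C k
        = ∑ k ∈ Finset.range (d + 1), (t ^ k / (k.factorial : ℝ)) • C k := by
      refine (Finset.sum_subset ?_ ?_).symm
      · intro k hk
        exact Finset.mem_range.mpr (lt_of_lt_of_le (Finset.mem_range.mp hk) hdm)
      · intro k hkm hk1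
        have hdk : d < k := by
          by_contra hle
          push_neg at hle
          exact hk1 (Finset.mem_range.mpr (by omega))
        rw [hzero k (Finset.mem_range.mp hkm) hdk, smul_zero]
    rw [hsub, Finset.sum_range_succ, add_comm]
  have hlow : ∀ t : ℝ, 1 ≤ t → 2 * b / a + 1 ≤ t →
      a / 2 ≤ ‖NormedSpace.exp (t • M) * (P * V)‖ := by
    intro t ht1 ht2
    have ht0 : (0:ℝ) < t := lt_of_lt_of_le one_pos ht1
    have hfirst : ‖(t ^ d / (d.factorial : ℝ)) • C d‖ = t ^ d * a := by
      rw [norm_smul, Real.norm_eq_abs, abs_of_nonneg (by positivity), ha]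
      ring
    have hsecond : ‖∑ k ∈ Finset.range d, (t ^ k / (k.factorial : ℝ)) • C k‖
        ≤ t ^ d / t * b := by
      refine (norm_sum_le _ _).trans ?_
      rw [hb, Finset.mul_sum]
      refine Finset.sum_le_sum fun k hk => ?_
      have hkd : k < d := Finset.mem_range.mp hk
      rw [norm_smul, Real.norm_eq_abs, abs_of_nonneg (by positivity)]
      have hpow : t ^ k ≤ t ^ d / t := by
        have h1 : t ^ k ≤ t ^ (d - 1) := pow_le_pow_right₀ ht1 (by omega)
        have h2 : t ^ (d - 1) = t ^ d / t := by
          rw [eq_div_iff ht0.ne', ← pow_succ]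
          congr 1
          omega
        rw [← h2]; exact h1
      calc t ^ k / (k.factorial : ℝ) * ‖C k‖ = t ^ k * (‖C k‖ / (k.factorial : ℝ)) := by ring
        _ ≤ t ^ d / t * (‖C k‖ / (k.factorial : ℝ)) :=
            mul_le_mul_of_nonneg_right hpow (by positivity)
    have hbt : b / t ≤ a / 2 := by
      rw [div_le_div_iff₀ ht0 two_pos]
      have h3 : a * (2 * b / a) = 2 * b := by field_simp
      have h4 : 2 * b + a ≤ a * t := by
        have h5 := mul_le_mul_of_nonneg_left ht2 ha0.le
        rwa [mul_add, h3, mul_one] at h5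
      linarith
    have htd : (1:ℝ) ≤ t ^ d := by
      simpa using pow_le_pow_left₀ zero_le_one ht1 d
    have hkey : ∀ (X Y : Matrix (Fin m) (Fin m) ℝ), ‖X‖ - ‖Y‖ ≤ ‖X + Y‖ := by
      intro X Y
      have h := norm_add_le (X + Y) (-Y)
      simp only [add_neg_cancel_right, norm_neg] at h
      linarith
    rw [hq' t]
    calc a / 2 ≤ t ^ d * (a / 2) := by nlinarith
      _ = t ^ d * a - t ^ d * (a / 2) := by ring
      _ ≤ t ^ d * a - t ^ d / t * b := by
          have h1 : t ^ d / t * b = t ^ d * (b / t) := by ring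
          have h2 : t ^ d * (b / t) ≤ t ^ d * (a / 2) :=
            mul_le_mul_of_nonneg_left hbt (by positivity)
          linarith
      _ ≤ ‖(t ^ d / (d.factorial : ℝ)) • C d‖
          - ‖∑ k ∈ Finset.range d, (t ^ k / (k.factorial : ℝ)) • C k‖ := by
          rw [hfirst]
          linarith
      _ ≤ ‖(t ^ d / (d.factorial : ℝ)) • C d
          + ∑ k ∈ Finset.range d, (t ^ k / (k.factorial : ℝ)) • C k‖ := hkey _ _
  set T := max 1 (2 * b / a + 1) with hT
  have hcont : Continuous fun t : ℝ => ‖∑ k ∈ Finset.range m, (t ^ k / (k.factorial : ℝ)) • C k‖ := by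
    apply Continuous.norm
    apply continuous_finset_sum
    intro k _
    exact ((continuous_pow k).div_const _).smul continuous_const
  have hne : (Set.Icc (1:ℝ) T).Nonempty := Set.nonempty_Icc.mpr (le_max_left _ _)
  obtain ⟨t₀, ht₀mem, ht₀min⟩ := isCompact_Icc.exists_isMinOn hne hcont.continuousOn
  have ht₀pos : 0 < ‖∑ k ∈ Finset.range m, (t₀ ^ k / (k.factorial : ℝ)) • C k‖ := by
    rw [← hq t₀]
    exact norm_pos_iff.mpr (hqne t₀)
  refine ⟨min (‖∑ k ∈ Finset.range m, (t₀ ^ k / (k.factorial : ℝ)) • C k‖) (a / 2),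
    lt_min ht₀pos (by positivity), ?_⟩
  intro t ht
  by_cases hcase : t ≤ T
  · have hmem : t ∈ Set.Icc (1:ℝ) T := Set.mem_Icc.mpr ⟨ht, hcase⟩
    have hle := (isMinOn_iff.mp ht₀min) t hmem
    rw [hq]
    exact le_trans (min_le_left _ _) hle
  · have hT2 : 2 * b / a + 1 ≤ t := le_trans (le_max_right _ _) (le_of_not_ge hcase)
    exact le_trans (min_le_right _ _) (hlow t ht hT2)

private lemma Pfix (A P : Matrix (Fin m) (Fin m) ℝ) (s : ℝ)
    (hPidem : P * P = P)
    (hPrange : Set.range P.mulVec = (GEsub A s : Set (Fin m → ℝ)))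
    (y : Fin m → ℝ) (k : ℕ) (hy : ((A - s • 1) ^ k).mulVec y = 0) : P.mulVec y = y := by
  have hyGE : y ∈ (GEsub A s : Set (Fin m → ℝ)) := by
    refine ⟨max k 1, le_max_right _ _, ?_⟩
    have h : (A - s • 1) ^ (max k 1) = (A - s • 1) ^ (max k 1 - k) * (A - s • 1) ^ k := by
      rw [← pow_add]; congr 1; omega
    rw [h, ← Matrix.mulVec_mulVec, hy, Matrix.mulVec_zero]
  rw [← hPrange] at hyGE
  obtain ⟨z, hz⟩ := hyGE
  rw [← hz, Matrix.mulVec_mulVec, hPidem]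

private lemma map_sub_scalar (A : Matrix (Fin m) (Fin m) ℝ) (s : ℝ) :
    (A.map Complex.ofReal) - (s : ℂ) • 1 = (A - s • 1).map Complex.ofReal := by
  ext i j
  by_cases h : i = j <;>
    simp [Matrix.map_apply, Matrix.sub_apply, Matrix.smul_apply, Matrix.one_apply, h]

private lemma map_pow_scalar (A : Matrix (Fin m) (Fin m) ℝ) (s : ℝ) (k : ℕ) :
    ((A.map Complex.ofReal) - (s : ℂ) • 1) ^ k = ((A - s • 1) ^ k).map Complex.ofReal := by
  rw [map_sub_scalar]
  have h1 : ∀ B : Matrix (Fin m) (Fin m) ℝ, B.map Complex.ofReal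
      = (Complex.ofRealHom.mapMatrix : Matrix (Fin m) (Fin m) ℝ →+* Matrix (Fin m) (Fin m) ℂ) B :=
    fun B => rfl
  rw [h1, h1, ← map_pow]

private lemma Pc_fix (A P : Matrix (Fin m) (Fin m) ℝ) (s : ℝ)
    (hPidem : P * P = P)
    (hPrange : Set.range P.mulVec = (GEsub A s : Set (Fin m → ℝ)))
    (X : Matrix (Fin m) (Fin m) ℂ) (k : ℕ)
    (hX : ((A.map Complex.ofReal) - (s : ℂ) • 1) ^ k * X = 0) :
    (P.map Complex.ofReal) * X = X := by
  rw [map_pow_scalar] at hX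
  ext i j
  set xr : Fin m → ℝ := fun l => (X l j).re with hxr
  set xi : Fin m → ℝ := fun l => (X l j).im with hxi
  have hEntry : ∀ i', ∑ l, ((((A - s • 1) ^ k) i' l : ℝ) : ℂ) * X l j = 0 := by
    intro i'
    have h := congrFun (congrFun hX i') j
    rw [Matrix.mul_apply] at h
    simpa [Matrix.map_apply] using h
  have hr : ((A - s • 1) ^ k).mulVec xr = 0 := by
    funext i'
    have h := congrArg Complex.re (hEntry i')
    rw [Complex.re_sum] at h
    simpa [Matrix.mulVec, dotProduct, hxr] using h
  have hi : ((A - s • 1) ^ k).mulVec xi = 0 := by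
    funext i'
    have h := congrArg Complex.im (hEntry i')
    rw [Complex.im_sum] at h
    simpa [Matrix.mulVec, dotProduct, hxi] using h
  have hPr := Pfix A P s hPidem hPrange xr k hr
  have hPi := Pfix A P s hPidem hPrange xi k hi
  have hgoal : ∑ l, ((P i l : ℝ) : ℂ) * X l j = X i j := by
    apply Complex.ext
    · rw [Complex.re_sum]
      have h1 : ∀ l, (((P i l : ℝ) : ℂ) * X l j).re = P i l * xr l := by
        intro l; simp [hxr]
      rw [Finset.sum_congr rfl fun l _ => h1 l]
      have := congrFun hPr i
      simpa [Matrix.mulVec, dotProduct, hxr] using this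
    · rw [Complex.im_sum]
      have h1 : ∀ l, (((P i l : ℝ) : ℂ) * X l j).im = P i l * xi l := by
        intro l; simp [hxi]
      rw [Finset.sum_congr rfl fun l _ => h1 l]
      have := congrFun hPi i
      simpa [Matrix.mulVec, dotProduct, hxi] using this
  rw [Matrix.mul_apply]
  simpa [Matrix.map_apply] using hgoal

private lemma mem_spectrum_of_ann (B : Matrix (Fin m) (Fin m) ℂ) (μ : ℂ)
    (u : Matrix (Fin m) (Fin m) ℂ) (hu : u ≠ 0) (k : ℕ)
    (hk : (B - μ • 1) ^ k * u = 0) : μ ∈ spectrum ℂ B := by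
  rw [spectrum.mem_iff]
  intro hunit
  rw [Algebra.algebraMap_eq_smul_one] at hunit
  have hunit' : IsUnit (B - μ • 1) := by
    have h := hunit.neg
    rwa [neg_sub] at h
  apply hu
  obtain ⟨w, hw⟩ := (hunit'.pow k)
  calc u = (w⁻¹ : (Matrix (Fin m) (Fin m) ℂ)ˣ) * ((w : Matrix (Fin m) (Fin m) ℂ) * u) := by
        rw [← mul_assoc, Units.inv_mul, one_mul]
    _ = (w⁻¹ : (Matrix (Fin m) (Fin m) ℂ)ˣ) * ((B - μ • 1) ^ k * u) := by rw [hw]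
    _ = 0 := by rw [hk, mul_zero]

private lemma eigen_decay (Ac : Matrix (Fin m) (Fin m) ℂ) (s : ℝ) (μ : ℂ) (hre : μ.re < s)
    (u : Matrix (Fin m) (Fin m) ℂ) (k : ℕ) (hk : (Ac - μ • 1) ^ k * u = 0) :
    ∃ C : ℝ, 0 ≤ C ∧ ∀ t : ℝ, 0 ≤ t →
      ‖NormedSpace.exp (t • (Ac - (s : ℂ) • 1)) * u‖
        ≤ C * Real.exp (-((s - μ.re) / 2) * t) := by
  set δ := (s - μ.re) / 2 with hδ
  have hδ0 : 0 < δ := by rw [hδ]; linarith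
  set N := Ac - μ • 1 with hN
  refine ⟨∑ j ∈ Finset.range k, ‖N ^ j * u‖ / δ ^ j,
    Finset.sum_nonneg fun j _ => by positivity, ?_⟩
  intro t ht
  have hsplit : t • (Ac - (s : ℂ) • 1)
      = ((t : ℂ) * (μ - (s : ℂ))) • (1 : Matrix (Fin m) (Fin m) ℂ) + t • N := by
    ext i j
    by_cases h : i = j <;>
      simp [hN, Matrix.one_apply, h, Matrix.smul_apply, Matrix.sub_apply, Complex.real_smul] <;>
      ring
  have hcomm : Commute (((t : ℂ) * (μ - (s : ℂ))) • (1 : Matrix (Fin m) (Fin m) ℂ)) (t • N) :=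
    ((Commute.one_left N).smul_left _).smul_right t
  rw [hsplit, Matrix.exp_add_of_commute _ _ hcomm, exp_scalar_c, smul_mul_assoc, one_mul,
    smul_mul_assoc, norm_smul]
  have hw : ‖Complex.exp ((t : ℂ) * (μ - (s : ℂ)))‖ = Real.exp (t * (μ.re - s)) := by
    rw [Complex.norm_exp]
    congr 1
    simp [Complex.mul_re]
  erw [hw, aux_exp_trunc N u k hk t]
  have hsum : ‖∑ j ∈ Finset.range k, (t ^ j / (j.factorial : ℝ)) • (N ^ j * u)‖
      ≤ ∑ j ∈ Finset.range k, t ^ j / (j.factorial : ℝ) * ‖N ^ j * u‖ := by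
    refine (norm_sum_le _ _).trans ?_
    refine Finset.sum_le_sum fun j _ => ?_
    rw [norm_smul, Real.norm_eq_abs, abs_of_nonneg (by positivity)]
  calc Real.exp (t * (μ.re - s))
        * ‖∑ j ∈ Finset.range k, (t ^ j / (j.factorial : ℝ)) • (N ^ j * u)‖
      ≤ Real.exp (t * (μ.re - s))
        * ∑ j ∈ Finset.range k, t ^ j / (j.factorial : ℝ) * ‖N ^ j * u‖ :=
        mul_le_mul_of_nonneg_left hsum (Real.exp_pos _).le
    _ = ∑ j ∈ Finset.range k,
          Real.exp (t * (μ.re - s)) * (t ^ j / (j.factorial : ℝ) * ‖N ^ j * u‖) := by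
        rw [Finset.mul_sum]
    _ ≤ ∑ j ∈ Finset.range k, ‖N ^ j * u‖ / δ ^ j * Real.exp (-δ * t) := by
        refine Finset.sum_le_sum fun j _ => ?_
        have hp := aux_poly_le_exp δ t hδ0 ht j
        have hfj : (0:ℝ) < (j.factorial : ℝ) := by positivity
        have h1 : t ^ j / (j.factorial : ℝ) * ‖N ^ j * u‖
            ≤ ((j.factorial : ℝ) / δ ^ j * Real.exp (δ * t)) / (j.factorial : ℝ) * ‖N ^ j * u‖ := by
          gcongr
        refine (mul_le_mul_of_nonneg_left h1 (Real.exp_pos _).le).trans_eq ?_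
        have hexp : Real.exp (t * (μ.re - s)) * Real.exp (δ * t) = Real.exp (-δ * t) := by
          rw [← Real.exp_add]
          congr 1
          rw [hδ]; ring
        have hj : ((j.factorial : ℝ) / δ ^ j * Real.exp (δ * t)) / (j.factorial : ℝ)
            = Real.exp (δ * t) / δ ^ j := by
          rw [div_eq_iff hfj.ne']
          ring
        rw [hj]
        calc Real.exp (t * (μ.re - s)) * (Real.exp (δ * t) / δ ^ j * ‖N ^ j * u‖)
            = (Real.exp (t * (μ.re - s)) * Real.exp (δ * t)) * (‖N ^ j * u‖ / δ ^ j) := by ring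
          _ = ‖N ^ j * u‖ / δ ^ j * Real.exp (-δ * t) := by rw [hexp]; ring
    _ = (∑ j ∈ Finset.range k, ‖N ^ j * u‖ / δ ^ j) * Real.exp (-δ * t) := by
        rw [Finset.sum_mul]

private lemma decay_bound (A P V : Matrix (Fin m) (Fin m) ℝ) (s : ℝ)
    (hperron : ∀ μ ∈ spectrum ℂ (A.map Complex.ofReal), μ ≠ (s : ℂ) → μ.re < s)
    (hPidem : P * P = P) (hPcomm : P * A = A * P)
    (hPrange : Set.range P.mulVec = (GEsub A s : Set (Fin m → ℝ))) :
    ∃ C : ℝ, 0 ≤ C ∧ ∃ δ : ℝ, 0 < δ ∧ ∀ t : ℝ, 0 ≤ t →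
      ‖NormedSpace.exp (t • (A - s • 1)) * ((1 - P) * V)‖ ≤ C * Real.exp (-δ * t) := by
  classical
  set Ac := A.map Complex.ofReal with hAc
  set Mc := Ac - (s : ℂ) • 1 with hMc
  set Pc := P.map Complex.ofReal with hPc
  set Wc := ((1 - P) * V).map Complex.ofReal with hWc
  -- commutation facts
  have hmapmul : ∀ (X Y : Matrix (Fin m) (Fin m) ℝ),
      (X * Y).map Complex.ofReal = X.map Complex.ofReal * Y.map Complex.ofReal := by
    intro X Y
    have h1 : ∀ B : Matrix (Fin m) (Fin m) ℝ, B.map Complex.ofReal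
        = (Complex.ofRealHom.mapMatrix :
            Matrix (Fin m) (Fin m) ℝ →+* Matrix (Fin m) (Fin m) ℂ) B := fun B => rfl
    rw [h1, h1, h1]
    exact _root_.map_mul _ X Y
  have hPA : Commute Pc Ac := by
    unfold Commute SemiconjBy
    rw [hPc, hAc, ← hmapmul, ← hmapmul, hPcomm]
  have hcommute : ∀ μ : ℂ, Commute (1 - Pc) (Ac - μ • 1) := by
    intro μ
    exact ((Commute.one_left _).sub_left
      (hPA.sub_right ((Commute.one_right Pc).smul_right μ)))
  -- generalized eigenspace decomposition over ℂ
  set ℓ : Module.End ℂ (Matrix (Fin m) (Fin m) ℂ) := LinearMap.mulLeft ℂ Ac with hℓ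
  have hℓpow : ∀ (μ : ℂ) (k : ℕ) (X : Matrix (Fin m) (Fin m) ℂ),
      ((ℓ - μ • 1) ^ k) X = (Ac - μ • 1) ^ k * X := by
    intro μ k X
    have h1 : ℓ - μ • 1 = LinearMap.mulLeft ℂ (Ac - μ • 1) := by
      ext Y
      simp [hℓ, LinearMap.mulLeft_apply, sub_mul, smul_mul_assoc]
    rw [h1, LinearMap.pow_mulLeft, LinearMap.mulLeft_apply]
  have htop := Module.End.iSup_maxGenEigenspace_eq_top (K := ℂ)
    (V := Matrix (Fin m) (Fin m) ℂ) ℓ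
  have hWmem : Wc ∈ ⨆ μ : ℂ, ℓ.maxGenEigenspace μ := htop ▸ Submodule.mem_top
  obtain ⟨f, hfmem, hfsum⟩ := (Submodule.mem_iSup_iff_exists_finsupp _ _).mp hWmem
  -- per-eigenvalue bounds
  have hkey : ∀ μ : ℂ, ∃ C : ℝ, 0 ≤ C ∧ ∃ δ : ℝ, 0 < δ ∧ (μ ∈ f.support →
      ∀ t : ℝ, 0 ≤ t →
        ‖NormedSpace.exp (t • Mc) * ((1 - Pc) * f μ)‖ ≤ C * Real.exp (-δ * t)) := by
    intro μ
    by_cases hcase : (1 - Pc) * f μ = 0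
    · exact ⟨0, le_refl 0, 1, one_pos, fun _ t ht => by
        rw [hcase, mul_zero, norm_zero, zero_mul]⟩
    · have hfμ := hfmem μ
      rw [Module.End.mem_maxGenEigenspace] at hfμ
      obtain ⟨k, hk0⟩ := hfμ
      have hk : (Ac - μ • 1) ^ k * f μ = 0 := by
        rw [← hℓpow μ k (f μ)]
        exact hk0
      have hgk : (Ac - μ • 1) ^ k * ((1 - Pc) * f μ) = 0 := by
        have hcp : (Ac - μ • 1) ^ k * (1 - Pc) = (1 - Pc) * (Ac - μ • 1) ^ k :=
          (((hcommute μ).pow_right k)).eq.symm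
        rw [← mul_assoc, hcp, mul_assoc, hk, mul_zero]
      by_cases hμs : μ = (s : ℂ)
      · exfalso
        apply hcase
        have hfix : Pc * f μ = f μ := by
          apply Pc_fix A P s hPidem hPrange (f μ) k
          rw [← hμs]
          exact hk
        rw [sub_mul, one_mul, hfix, sub_self]
      · have hμspec : μ ∈ spectrum ℂ Ac :=
          mem_spectrum_of_ann Ac μ ((1 - Pc) * f μ) hcase k hgk
        have hre : μ.re < s := hperron μ hμspec hμs
        obtain ⟨C, hC, hbound⟩ := eigen_decay Ac s μ hre ((1 - Pc) * f μ) k hgk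
        exact ⟨C, hC, (s - μ.re) / 2, by linarith, fun _ t ht => hbound t ht⟩
  choose Cf hCf δf hδf hbound using hkey
  set F := f.support with hF
  obtain ⟨δ₀, hδ₀pos, hδ₀le⟩ : ∃ δ₀ : ℝ, 0 < δ₀ ∧ ∀ μ ∈ F, δ₀ ≤ δf μ := by
    refine ⟨(insert 1 (F.image δf)).min' (Finset.insert_nonempty _ _), ?_, ?_⟩
    · rcases Finset.mem_insert.mp ((insert 1 (F.image δf)).min'_mem (Finset.insert_nonempty _ _)) with h | h
      · rw [h]; exact one_pos
      · obtain ⟨μ, -, hμ⟩ := Finset.mem_image.mp h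
        rw [← hμ]
        exact hδf μ
    · intro μ hμ
      exact Finset.min'_le _ _ (Finset.mem_insert_of_mem (Finset.mem_image_of_mem _ hμ))
  refine ⟨∑ μ ∈ F, Cf μ, Finset.sum_nonneg fun μ _ => hCf μ, δ₀, hδ₀pos, ?_⟩
  intro t ht
  -- transfer to ℂ
  have hcont : Continuous fun X : Matrix (Fin m) (Fin m) ℝ => X.map Complex.ofReal := by
    exact (Complex.ofRealAm.toLinearMap.mapMatrix :
      Matrix (Fin m) (Fin m) ℝ →ₗ[ℝ] Matrix (Fin m) (Fin m) ℂ).continuous_of_finiteDimensional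
  have hmapexp : (NormedSpace.exp (t • (A - s • 1))).map Complex.ofReal
      = NormedSpace.exp (t • Mc) := by
    have h := NormedSpace.map_exp (Complex.ofRealHom.mapMatrix :
      Matrix (Fin m) (Fin m) ℝ →+* Matrix (Fin m) (Fin m) ℂ) hcont (t • (A - s • 1))
    have h2 : (Complex.ofRealHom.mapMatrix :
        Matrix (Fin m) (Fin m) ℝ →+* Matrix (Fin m) (Fin m) ℂ) (t • (A - s • 1))
        = t • Mc := by
      have h3 : (Complex.ofRealHom.mapMatrix :
          Matrix (Fin m) (Fin m) ℝ →+* Matrix (Fin m) (Fin m) ℂ) (t • (A - s • 1))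
          = (t • (A - s • 1)).map Complex.ofReal := rfl
      rw [h3]
      ext i j
      simp [Matrix.map_apply, Matrix.smul_apply, hMc, hAc, Matrix.sub_apply, Matrix.one_apply]
      by_cases h : i = j <;> simp [h, Complex.real_smul] <;> ring
    rw [h2] at h
    exact h
  have htrans : ‖NormedSpace.exp (t • (A - s • 1)) * ((1 - P) * V)‖
      = ‖NormedSpace.exp (t • Mc) * Wc‖ := by
    rw [← hmapexp, hWc, ← hmapmul]
    exact (Matrix.frobenius_norm_map_eq _ Complex.ofReal fun x => Complex.norm_real x).symm
  rw [htrans]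
  -- decompose Wc
  have h1P : (1 - P) * (1 - P) = (1 - P) := by
    rw [sub_mul, one_mul, mul_sub, mul_one, hPidem]
    abel
  have h2 : ((1 : Matrix (Fin m) (Fin m) ℝ) - P).map Complex.ofReal = 1 - Pc := by
    ext i j
    by_cases h : i = j <;>
      simp [Matrix.map_apply, Matrix.sub_apply, Matrix.one_apply, h, hPc]
  have hWQ : Wc = (1 - Pc) * Wc := by
    rw [hWc, ← h2, ← hmapmul, ← mul_assoc, h1P]
  have hWsum : Wc = ∑ μ ∈ F, (1 - Pc) * f μ := by
    calc Wc = (1 - Pc) * Wc := hWQ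
      _ = (1 - Pc) * (f.sum fun _ x => x) := by rw [hfsum]
      _ = ∑ μ ∈ F, (1 - Pc) * f μ := by
          rw [Finsupp.sum, Finset.mul_sum]
  calc ‖NormedSpace.exp (t • Mc) * Wc‖
      = ‖∑ μ ∈ F, NormedSpace.exp (t • Mc) * ((1 - Pc) * f μ)‖ := by
        rw [← Finset.mul_sum, ← hWsum]
    _ ≤ ∑ μ ∈ F, ‖NormedSpace.exp (t • Mc) * ((1 - Pc) * f μ)‖ := norm_sum_le _ _
    _ ≤ ∑ μ ∈ F, Cf μ * Real.exp (-δ₀ * t) := by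
        refine Finset.sum_le_sum fun μ hμ => ?_
        refine (hbound μ hμ t ht).trans ?_
        refine mul_le_mul_of_nonneg_left ?_ (hCf μ)
        apply Real.exp_le_exp.mpr
        have h := hδ₀le μ hμ
        nlinarith [mul_le_mul_of_nonneg_right h ht]
    _ = (∑ μ ∈ F, Cf μ) * Real.exp (-δ₀ * t) := by rw [Finset.sum_mul]

/-- For a Perron-like A with principal eigenvalue s, spectral projection P onto
GE_s(A), and nonsingular V with ‖V‖ = 1, Y = PV, X_n(t) = ∑_{k≤n} (t^k/k!)A^kV, there are
κ, B₀, δ > 0 such that for every n and t ≥ 1 with X_n(t) ≠ 0 one has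
‖X_n(t)/‖X_n(t)‖ − e^{t(A−sI)}Y/‖e^{t(A−sI)}Y‖‖ ≤ B₀e^{−δt} + (2/κ)((t‖A‖)^{n+1}/(n+1)!)e^{2‖A‖t}. -/
theorem stmt11 {m : ℕ} (A : Matrix (Fin m) (Fin m) ℝ) (s : ℝ)
    (hs : s ∈ spectrum ℝ A)
    (hperron : ∀ μ ∈ spectrum ℂ (A.map Complex.ofReal), μ ≠ (s : ℂ) → μ.re < s)
    (P : Matrix (Fin m) (Fin m) ℝ)
    (hPidem : P * P = P) (hPcomm : P * A = A * P)
    (hPrange : Set.range P.mulVec = (GEsub A s : Set (Fin m → ℝ)))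
    (V : Matrix (Fin m) (Fin m) ℝ) (hV : IsUnit V) (hVnorm : fnorm V = 1) :
    ∃ κ : ℝ, 0 < κ ∧ ∃ B₀ : ℝ, 0 < B₀ ∧ ∃ δ : ℝ, 0 < δ ∧
      ∀ n : ℕ, ∀ t : ℝ, 1 ≤ t → texp A n t * V ≠ 0 →
        fnorm ((fnorm (texp A n t * V))⁻¹ • (texp A n t * V) -
            (fnorm (mexp (t • (A - s • 1)) * (P * V)))⁻¹ • (mexp (t • (A - s • 1)) * (P * V)))
          ≤ B₀ * Real.exp (-δ * t) +
            (2 / κ) * ((t * fnorm A) ^ (n + 1) / (Nat.factorial (n + 1) : ℝ)) *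
              Real.exp (2 * fnorm A * t) := by
  classical
  rcases Nat.eq_zero_or_pos m with hm0 | hm0
  · exfalso
    subst hm0
    haveI := subsing_zero
    exact (spectrum.mem_iff.mp hs) (isUnit_of_subsingleton _)
  have hVnorm' : ‖V‖ = 1 := by rw [← fnorm_eq_norm]; exact hVnorm
  obtain ⟨κ₀, hκ₀, hκbound⟩ := kappa_bound A P V s
    (PV_ne_zero A P V s hs hPidem hPrange hV) (pow_mul_P A P s hPrange)
  obtain ⟨C, hC, δ, hδpos, hdecay⟩ := decay_bound A P V s hperron hPidem hPcomm hPrange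
  refine ⟨min κ₀ 1, lt_min hκ₀ one_pos, 2 * C / κ₀ + 1, by positivity, δ, hδpos, ?_⟩
  intro n t ht hXne
  have ht0 : (0:ℝ) ≤ t := le_trans zero_le_one ht
  simp only [mexp_eq, fnorm_eq_norm]
  set X := texp A n t * V with hX
  set Z := NormedSpace.exp (t • (A - s • 1)) * (P * V) with hZ
  set EV := NormedSpace.exp (t • (A - s • 1)) * V with hEV
  set G := NormedSpace.exp (t • A) * V with hG
  have hZlow : κ₀ ≤ ‖Z‖ := hκbound t ht
  have hZne : Z ≠ 0 := by
    intro h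
    rw [h, norm_zero] at hZlow
    linarith
  have hAnorm : ‖t • A‖ = t * ‖A‖ := by
    rw [norm_smul, Real.norm_eq_abs, abs_of_nonneg ht0]
  have hGE : V = NormedSpace.exp (-(t • A)) * G := by
    rw [hG, ← mul_assoc, ← Matrix.exp_add_of_commute _ _ (Commute.neg_left (Commute.refl (t • A))),
      neg_add_cancel, NormedSpace.exp_zero, one_mul]
  have hGlow : (Real.exp (t * ‖A‖))⁻¹ ≤ ‖G‖ := by
    have h4 : ‖V‖ ≤ Real.exp ‖-(t • A)‖ * ‖G‖ := by
      rw [hGE]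
      exact aux_norm_exp_mul_le _ _
    rw [norm_neg, hAnorm, hVnorm'] at h4
    have h5 : (Real.exp (t * ‖A‖))⁻¹ * 1
        ≤ (Real.exp (t * ‖A‖))⁻¹ * (Real.exp (t * ‖A‖) * ‖G‖) :=
      mul_le_mul_of_nonneg_left h4 (by positivity)
    rwa [mul_one, ← mul_assoc, inv_mul_cancel₀ (Real.exp_pos _).ne', one_mul] at h5
  have hGne : G ≠ 0 := by
    intro h
    rw [h, norm_zero] at hGlow
    have h2 : (0:ℝ) < (Real.exp (t * ‖A‖))⁻¹ := by positivity
    linarith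
  have hGsmul : G = Real.exp (t * s) • EV := by
    rw [hG, hEV, exp_shift A s t, smul_mul_assoc]
  have hEVne : EV ≠ 0 := by
    intro h
    apply hGne
    rw [hGsmul, h, smul_zero]
  have hXG : ‖X - G‖ ≤ (t * ‖A‖) ^ (n + 1) / (((n + 1).factorial : ℝ)) * Real.exp (t * ‖A‖) := by
    have h := aux_remainder (t • A) V (le_of_eq hVnorm') n
    rw [← texp_mul, hAnorm] at h
    have h2 : X - G = -(NormedSpace.exp (t • A) * V - texp A n t * V) := by
      rw [hX, hG]; abel
    rw [h2, norm_neg]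
    exact h
  have hT1 : ‖‖X‖⁻¹ • X - ‖G‖⁻¹ • G‖
      ≤ 2 * ((t * ‖A‖) ^ (n + 1) / (((n + 1).factorial : ℝ))) * Real.exp (2 * ‖A‖ * t) := by
    refine (aux_normalize X G hXne hGne).trans ?_
    have hGinv : ‖G‖⁻¹ ≤ Real.exp (t * ‖A‖) := by
      have h1 : (0:ℝ) < (Real.exp (t * ‖A‖))⁻¹ := by positivity
      have h2 := inv_anti₀ h1 hGlow
      rwa [inv_inv] at h2
    calc 2 * ‖X - G‖ / ‖G‖ = 2 * ‖X - G‖ * ‖G‖⁻¹ := by rw [div_eq_mul_inv]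
      _ ≤ 2 * ((t * ‖A‖) ^ (n + 1) / (((n + 1).factorial : ℝ)) * Real.exp (t * ‖A‖))
          * Real.exp (t * ‖A‖) :=
          mul_le_mul (by nlinarith [hXG]) hGinv (by positivity) (by positivity)
      _ = 2 * ((t * ‖A‖) ^ (n + 1) / (((n + 1).factorial : ℝ))) * Real.exp (2 * ‖A‖ * t) := by
          rw [show 2 * ‖A‖ * t = t * ‖A‖ + t * ‖A‖ by ring, Real.exp_add]
          ring
  have hT2 : ‖‖EV‖⁻¹ • EV - ‖Z‖⁻¹ • Z‖ ≤ (2 * C / κ₀ + 1) * Real.exp (-δ * t) := by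
    refine (aux_normalize EV Z hEVne hZne).trans ?_
    have hEVZ : EV - Z = NormedSpace.exp (t • (A - s • 1)) * ((1 - P) * V) := by
      rw [hEV, hZ, ← mul_sub, sub_mul, one_mul]
    have hnum : ‖EV - Z‖ ≤ C * Real.exp (-δ * t) := by
      rw [hEVZ]
      exact hdecay t ht0
    have hstep : 2 * ‖EV - Z‖ / ‖Z‖ ≤ 2 * (C * Real.exp (-δ * t)) / κ₀ :=
      div_le_div₀ (by positivity) (by linarith) hκ₀ hZlow
    refine hstep.trans ?_
    have hexp := (Real.exp_pos (-δ * t)).le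
    calc 2 * (C * Real.exp (-δ * t)) / κ₀ = (2 * C / κ₀) * Real.exp (-δ * t) := by ring
      _ ≤ (2 * C / κ₀ + 1) * Real.exp (-δ * t) := by
          apply mul_le_mul_of_nonneg_right _ hexp
          linarith
  have hGnormed : ‖G‖⁻¹ • G = ‖EV‖⁻¹ • EV := by
    rw [hGsmul]
    exact aux_normalize_smul _ (Real.exp_pos _) EV
  have htri : ‖‖X‖⁻¹ • X - ‖Z‖⁻¹ • Z‖
      ≤ ‖‖X‖⁻¹ • X - ‖G‖⁻¹ • G‖ + ‖‖EV‖⁻¹ • EV - ‖Z‖⁻¹ • Z‖ := by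
    calc ‖‖X‖⁻¹ • X - ‖Z‖⁻¹ • Z‖
        ≤ ‖‖X‖⁻¹ • X - ‖G‖⁻¹ • G‖ + ‖‖G‖⁻¹ • G - ‖Z‖⁻¹ • Z‖ := by
          have h := dist_triangle (‖X‖⁻¹ • X) (‖G‖⁻¹ • G) (‖Z‖⁻¹ • Z)
          simpa [dist_eq_norm] using h
      _ = _ := by rw [hGnormed]
  have hminpos : (0:ℝ) < min κ₀ 1 := lt_min hκ₀ one_pos
  have hfac : (0:ℝ) ≤ (t * ‖A‖) ^ (n + 1) / (((n + 1).factorial : ℝ)) * Real.exp (2 * ‖A‖ * t) := by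
    positivity
  have h2le : (2:ℝ) ≤ 2 / min κ₀ 1 := by
    have h := div_le_div_of_nonneg_left (by norm_num : (0:ℝ) ≤ 2) hminpos (min_le_right κ₀ 1)
    simpa using h
  have hT1' : ‖‖X‖⁻¹ • X - ‖G‖⁻¹ • G‖
      ≤ 2 / min κ₀ 1 * ((t * ‖A‖) ^ (n + 1) / (((n + 1).factorial : ℝ)))
        * Real.exp (2 * ‖A‖ * t) := by
    refine hT1.trans ?_
    have := mul_le_mul_of_nonneg_right h2le hfac
    calc 2 * ((t * ‖A‖) ^ (n + 1) / (((n + 1).factorial : ℝ))) * Real.exp (2 * ‖A‖ * t)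
        = 2 * ((t * ‖A‖) ^ (n + 1) / (((n + 1).factorial : ℝ)) * Real.exp (2 * ‖A‖ * t)) := by
          ring
      _ ≤ 2 / min κ₀ 1 * ((t * ‖A‖) ^ (n + 1) / (((n + 1).factorial : ℝ))
          * Real.exp (2 * ‖A‖ * t)) := this
      _ = 2 / min κ₀ 1 * ((t * ‖A‖) ^ (n + 1) / (((n + 1).factorial : ℝ)))
          * Real.exp (2 * ‖A‖ * t) := by ring
  linarith [htri, hT1', hT2]

end MatrixAux
end

section
/- Let A be a Perron-like real m×m matrix with principal eigenvalue s, let ν be the cyclic order of GE_s(A), Π₁ the spectral projection onto GE_s(A), and d an integer with ν − 1 ≤ d ≤ m − 1. Define P(t) = Σ_{k=0}^d (−1)^k (t^k/k!) (A − sI)^k. Then there exist constants C, δ > 0 such that for every real m×m matrix V, writing Y = Π₁V and X̂(t) = e^{t(A−sI)}V, one has ‖P(t)·X̂(t) − Y‖ ≤ C·‖V‖·(1 + t^d)·e^{−δt} for all t ≥ 0. -/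
open Matrix

section AuxS17
open NormedSpace
namespace S17

lemma clm_exp_tsum {𝔸 E : Type*} [NormedRing 𝔸] [NormedAlgebra ℝ 𝔸] [CompleteSpace 𝔸]
    [NormedAddCommGroup E] [NormedSpace ℝ E] (φ : 𝔸 →L[ℝ] E) (x : 𝔸) :
    φ (exp x) = ∑' n : ℕ, φ (((n.factorial : ℝ))⁻¹ • x ^ n) := by
  rw [exp_eq_tsum ℝ]
  exact φ.map_tsum (expSeries_summable' (𝕂 := ℝ) x)

lemma clm_exp_finite {𝔸 E : Type*} [NormedRing 𝔸] [NormedAlgebra ℝ 𝔸] [CompleteSpace 𝔸]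
    [NormedAddCommGroup E] [NormedSpace ℝ E] (φ : 𝔸 →L[ℝ] E) (x : 𝔸) (K : ℕ)
    (h : ∀ n, K ≤ n → φ (((n.factorial : ℝ))⁻¹ • x ^ n) = 0) :
    φ (exp x) = ∑ k ∈ Finset.range K, φ (((k.factorial : ℝ))⁻¹ • x ^ k) := by
  rw [clm_exp_tsum]
  exact tsum_eq_sum (fun n hn => h n (by simpa using hn))

variable {m : ℕ}

lemma exp_mul_right {𝔸 : Type} [RCLike 𝔸] (X C : Matrix (Fin m) (Fin m) 𝔸)
    (h : X * C = 0) : exp X * C = C := by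
  letI := Matrix.frobeniusNormedAddCommGroup (α := 𝔸) (m := Fin m) (n := Fin m)
  letI := Matrix.frobeniusNormedRing (α := 𝔸) (m := Fin m)
  letI := Matrix.frobeniusNormedAlgebra (α := 𝔸) (m := Fin m) (R := ℝ)
  let φ : Matrix (Fin m) (Fin m) 𝔸 →L[ℝ] Matrix (Fin m) (Fin m) 𝔸 :=
    LinearMap.toContinuousLinearMap (LinearMap.mulRight ℝ C)
  have hφ : ∀ M, φ M = M * C := fun M => rfl
  have h2 := clm_exp_finite φ X 1 ?_
  · have h3 : exp X * C = ∑ k ∈ Finset.range 1, ((k.factorial : ℝ))⁻¹ • X ^ k * C := h2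
    simpa using h3
  · rintro (_|n) hn
    · omega
    · show (((n+1).factorial : ℝ))⁻¹ • X ^ (n+1) * C = 0
      simp only [hφ, smul_mul_assoc, pow_succ, mul_assoc, h, mul_zero, smul_zero]

lemma exp_nilp {𝔸 : Type} [RCLike 𝔸] (X : Matrix (Fin m) (Fin m) 𝔸) (K : ℕ)
    (h : X ^ K = 0) :
    exp X = ∑ k ∈ Finset.range K, ((k.factorial : ℝ))⁻¹ • X ^ k := by
  letI := Matrix.frobeniusNormedAddCommGroup (α := 𝔸) (m := Fin m) (n := Fin m)
  letI := Matrix.frobeniusNormedRing (α := 𝔸) (m := Fin m)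
  letI := Matrix.frobeniusNormedAlgebra (α := 𝔸) (m := Fin m) (R := ℝ)
  have h2 := clm_exp_finite (ContinuousLinearMap.id ℝ _) X K ?_
  · exact h2
  · intro n hn
    have hX : X ^ n = 0 := by
      calc X ^ n = X ^ K * X ^ (n - K) := by rw [← pow_add]; congr 1; omega
      _ = 0 := by rw [h, zero_mul]
    simp [hX]

lemma exp_mulVec (X : Matrix (Fin m) (Fin m) ℂ) (v : Fin m → ℂ) (K : ℕ)
    (h : (X ^ K).mulVec v = 0) :
    (exp X).mulVec v
      = ∑ k ∈ Finset.range K, ((k.factorial : ℝ))⁻¹ • (X ^ k).mulVec v := by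
  letI := Matrix.frobeniusNormedAddCommGroup (α := ℂ) (m := Fin m) (n := Fin m)
  letI := Matrix.frobeniusNormedRing (α := ℂ) (m := Fin m)
  letI := Matrix.frobeniusNormedAlgebra (α := ℂ) (m := Fin m) (R := ℝ)
  let ψ : Matrix (Fin m) (Fin m) ℂ →ₗ[ℝ] (Fin m → ℂ) :=
    { toFun := fun M => M.mulVec v
      map_add' := fun M N => Matrix.add_mulVec M N v
      map_smul' := fun r M => Matrix.smul_mulVec r M v }
  let φ : Matrix (Fin m) (Fin m) ℂ →L[ℝ] (Fin m → ℂ) := LinearMap.toContinuousLinearMap ψ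
  have hφ : ∀ M, φ M = M.mulVec v := fun M => rfl
  have h2 := clm_exp_finite φ X K ?_
  · have h3 : (exp X).mulVec v
        = ∑ k ∈ Finset.range K, (((k.factorial : ℝ))⁻¹ • X ^ k).mulVec v := h2
    simpa [hφ, Matrix.smul_mulVec] using h3
  · intro n hn
    have hX : (X ^ n).mulVec v = 0 := by
      have : X ^ n = X ^ (n - K) * X ^ K := by rw [← pow_add]; congr 1; omega
      rw [this, ← Matrix.mulVec_mulVec, h, Matrix.mulVec_zero]
    show (((n.factorial : ℝ))⁻¹ • X ^ n).mulVec v = 0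
    simp [hφ, Matrix.smul_mulVec, hX]

lemma exp_smul_one (c : ℂ) :
    exp ((c • 1 : Matrix (Fin m) (Fin m) ℂ)) = Complex.exp c • 1 := by
  letI := Matrix.frobeniusNormedAddCommGroup (α := ℂ) (m := Fin m) (n := Fin m)
  letI := Matrix.frobeniusNormedRing (α := ℂ) (m := Fin m)
  letI := Matrix.frobeniusNormedAlgebra (α := ℂ) (m := Fin m) (R := ℝ)
  let ψ : ℂ →ₗ[ℝ] Matrix (Fin m) (Fin m) ℂ :=
    { toFun := fun z => z • 1
      map_add' := fun a b => add_smul a b 1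
      map_smul' := fun r z => smul_assoc r z (1 : Matrix (Fin m) (Fin m) ℂ) }
  let φ : ℂ →L[ℝ] Matrix (Fin m) (Fin m) ℂ := LinearMap.toContinuousLinearMap ψ
  have hφ : ∀ z, φ z = z • 1 := fun z => rfl
  have h1 := clm_exp_tsum φ c
  have h2 := clm_exp_tsum (ContinuousLinearMap.id ℝ (Matrix (Fin m) (Fin m) ℂ)) (c • 1)
  have h3 : ∀ n : ℕ, ((n.factorial : ℝ))⁻¹ • (c • (1 : Matrix (Fin m) (Fin m) ℂ)) ^ n
      = φ (((n.factorial : ℝ))⁻¹ • c ^ n) := by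
    intro n
    rw [hφ, smul_pow, one_pow, smul_assoc]
  have h4 : exp ((c • 1 : Matrix (Fin m) (Fin m) ℂ)) = φ (exp c) := by
    exact (h2.trans ((tsum_congr h3).trans h1.symm) : _)
  rw [h4, hφ]
  congr 1
  rw [Complex.exp_eq_exp_ℂ]

lemma map_exp_ofReal (M : Matrix (Fin m) (Fin m) ℝ) :
    (exp M).map Complex.ofReal = exp (M.map Complex.ofReal) := by
  letI := Matrix.frobeniusNormedAddCommGroup (α := ℝ) (m := Fin m) (n := Fin m)
  letI := Matrix.frobeniusNormedRing (α := ℝ) (m := Fin m)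
  letI := Matrix.frobeniusNormedAlgebra (α := ℝ) (m := Fin m) (R := ℝ)
  letI := Matrix.frobeniusNormedAddCommGroup (α := ℂ) (m := Fin m) (n := Fin m)
  letI := Matrix.frobeniusNormedRing (α := ℂ) (m := Fin m)
  letI := Matrix.frobeniusNormedAlgebra (α := ℂ) (m := Fin m) (R := ℝ)
  letI := Matrix.frobeniusNormedAlgebra (α := ℝ) (m := Fin m) (R := ℚ)
  letI := Matrix.frobeniusNormedAlgebra (α := ℂ) (m := Fin m) (R := ℚ)
  have hc : Continuous (fun N : Matrix (Fin m) (Fin m) ℝ => N.map Complex.ofReal) := by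
    apply continuous_matrix
    intro i j
    exact Complex.continuous_ofReal.comp ((continuous_apply j).comp (continuous_apply i))
  exact map_exp (Complex.ofRealHom.mapMatrix) hc M

end S17

namespace S17
open Module

lemma decay {m : ℕ} (W : Matrix (Fin m) (Fin m) ℝ)
    (hspec : ∀ μ ∈ spectrum ℂ (W.map Complex.ofReal), μ.re < 0) :
    ∃ C δ : ℝ, 0 < δ ∧ 0 ≤ C ∧ ∀ t : ℝ, 0 ≤ t →
      ∀ i j, |(exp (t • W)) i j| ≤ C * Real.exp (-δ * t) := by
  set Wc := W.map Complex.ofReal with hWc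
  have hfin : (spectrum ℂ Wc).Finite := Matrix.finite_spectrum Wc
  obtain ⟨δ', hδ'pos, hδ'le⟩ : ∃ δ', 0 < δ' ∧ ∀ μ ∈ spectrum ℂ Wc, δ' ≤ -μ.re := by
    set T := hfin.toFinset.image (fun μ => -μ.re) with hT
    rcases Finset.eq_empty_or_nonempty T with h | h
    · refine ⟨1, one_pos, fun μ hμ => ?_⟩
      exfalso
      have : -μ.re ∈ T := Finset.mem_image_of_mem _ (hfin.mem_toFinset.mpr hμ)
      simp [h] at this
    · refine ⟨min (T.min' h) 1, ?_, ?_⟩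
      · rcases Finset.mem_image.mp (T.min'_mem h) with ⟨μ, hμ, hval⟩
        have hμs : μ ∈ spectrum ℂ Wc := hfin.mem_toFinset.mp hμ
        have := hspec μ hμs
        simp only [lt_min_iff]
        constructor
        · rw [← hval]; linarith
        · exact one_pos
      · intro μ hμ
        have : -μ.re ∈ T := Finset.mem_image_of_mem _ (hfin.mem_toFinset.mpr hμ)
        exact le_trans (min_le_left _ _) (T.min'_le _ this)
  set δ : ℝ := δ' / 2 with hδ
  have hδpos : 0 < δ := by positivity
  have hkey : ∀ v : Fin m → ℂ, ∃ C, 0 ≤ C ∧ ∀ t : ℝ, 0 ≤ t →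
      ∀ i, ‖((exp (t • Wc)).mulVec v) i‖ ≤ C * Real.exp (-δ * t) := by
    set f : Module.End ℂ (Fin m → ℂ) := Matrix.toLinAlgEquiv' Wc with hf
    intro v
    have hv : v ∈ ⨆ μ, f.maxGenEigenspace μ := by
      rw [Module.End.iSup_maxGenEigenspace_eq_top]; exact Submodule.mem_top
    refine Submodule.iSup_induction (motive := fun v => ∃ C, 0 ≤ C ∧ ∀ t : ℝ, 0 ≤ t →
      ∀ i, ‖((exp (t • Wc)).mulVec v) i‖ ≤ C * Real.exp (-δ * t))
      _ hv ?_ ?_ ?_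
    · -- generators
      intro μ v hvμ
      by_cases hv0 : v = 0
      · exact ⟨0, le_refl 0, by simp [hv0, Matrix.mulVec_zero]⟩
      have hμspec : μ ∈ spectrum ℂ Wc := by
        have h1 : f.HasEigenvalue μ := by
          apply Module.End.hasEigenvalue_of_hasGenEigenvalue
            (k := Module.finrank ℂ (Fin m → ℂ))
          rw [Module.End.hasGenEigenvalue_iff]
          intro hbot
          apply hv0
          have := (Module.End.maxGenEigenspace_eq_genEigenspace_finrank f μ) ▸ hvμ
          rw [hbot] at this
          simpa using this
        have h2 := h1.mem_spectrum
        rwa [AlgEquiv.spectrum_eq (Matrix.toLinAlgEquiv' (R := ℂ) (n := Fin m)) Wc] at h2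
      have hre : μ.re ≤ -δ' := by have := hδ'le μ hμspec; linarith
      obtain ⟨K, hK⟩ := (Module.End.mem_maxGenEigenspace f μ v).mp hvμ
      set N : Matrix (Fin m) (Fin m) ℂ := Wc - μ • 1 with hN
      have hKm : (N ^ K).mulVec v = 0 := by
        have heq : f - μ • 1 = Matrix.toLinAlgEquiv' N := by
          rw [hN, map_sub, _root_.map_smul, _root_.map_one]
        rw [heq, ← map_pow] at hK
        rwa [Matrix.toLinAlgEquiv'_apply] at hK
      -- split the exponential
      have hsplit : ∀ t : ℝ, (exp (t • Wc)).mulVec v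
          = Complex.exp ((t : ℂ) * μ) •
            ∑ k ∈ Finset.range K, (((k.factorial : ℝ))⁻¹ * t ^ k) • (N ^ k).mulVec v := by
        intro t
        have hdec : t • Wc = ((t : ℂ) * μ) • (1 : Matrix (Fin m) (Fin m) ℂ) + t • N := by
          rw [hN, smul_sub]
          have : ((t : ℂ) * μ) • (1 : Matrix (Fin m) (Fin m) ℂ) = t • (μ • 1) := by
            ext i j
            simp [Matrix.smul_apply, Complex.real_smul]
            ring
          rw [this]
          abel
        have hcomm : Commute (((t : ℂ) * μ) • (1 : Matrix (Fin m) (Fin m) ℂ)) (t • N) :=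
          ((Commute.one_left (t • N)).smul_left _)
        rw [hdec, Matrix.exp_add_of_commute _ _ hcomm, exp_smul_one,
          smul_mul_assoc, one_mul]
        have hNK : ((t • N) ^ K).mulVec v = 0 := by
          rw [smul_pow, Matrix.smul_mulVec, hKm, smul_zero]
        rw [Matrix.smul_mulVec, exp_mulVec _ _ K hNK]
        congr 1
        apply Finset.sum_congr rfl
        intro k _
        rw [smul_pow, Matrix.smul_mulVec, smul_smul]
      set b : ℕ → ℝ := fun k => ∑ i, ‖(N ^ k).mulVec v i‖ with hb
      have hbnn : ∀ k, 0 ≤ b k := fun k => Finset.sum_nonneg fun i _ => (norm_nonneg _)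
      refine ⟨∑ k ∈ Finset.range K, δ⁻¹ ^ k * b k,
        Finset.sum_nonneg fun k _ => by positivity, ?_⟩
      intro t ht i
      rw [hsplit t]
      have habs : ‖(Complex.exp ((t : ℂ) * μ) •
          ∑ k ∈ Finset.range K, (((k.factorial : ℝ))⁻¹ * t ^ k) • (N ^ k).mulVec v) i‖
          ≤ Real.exp (t * μ.re) *
            ∑ k ∈ Finset.range K, (((k.factorial : ℝ))⁻¹ * t ^ k) * b k := by
        rw [Pi.smul_apply, smul_eq_mul, norm_mul, Complex.norm_exp]
        have h1 : ((t : ℂ) * μ).re = t * μ.re := by simp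
        rw [h1]
        apply mul_le_mul_of_nonneg_left _ (Real.exp_pos _).le
        rw [Finset.sum_apply]
        refine le_trans (norm_sum_le _ _) ?_
        apply Finset.sum_le_sum
        intro k _
        rw [Pi.smul_apply, Complex.real_smul, norm_mul, Complex.norm_real, Real.norm_eq_abs]
        have : |((k.factorial : ℝ))⁻¹ * t ^ k| = ((k.factorial : ℝ))⁻¹ * t ^ k := by
          apply abs_of_nonneg; positivity
        rw [this]
        apply mul_le_mul_of_nonneg_left _ (by positivity)
        exact Finset.single_le_sum (f := fun i => ‖(N ^ k).mulVec v i‖)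
          (fun i _ => norm_nonneg _) (Finset.mem_univ i)
      refine le_trans habs ?_
      -- now the scalar estimate
      have hsum : ∑ k ∈ Finset.range K, (((k.factorial : ℝ))⁻¹ * t ^ k) * b k
          ≤ (∑ k ∈ Finset.range K, δ⁻¹ ^ k * b k) * Real.exp (δ * t) := by
        rw [Finset.sum_mul]
        apply Finset.sum_le_sum
        intro k _
        have htk : t ^ k ≤ (k.factorial : ℝ) * δ⁻¹ ^ k * Real.exp (δ * t) := by
          have h2 := Real.pow_div_factorial_le_exp (x := δ * t) (by positivity) k
          have h3 : (δ * t) ^ k = δ ^ k * t ^ k := mul_pow δ t k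
          rw [h3, div_le_iff₀ (by positivity : (0:ℝ) < (k.factorial : ℝ))] at h2
          have h4 : t ^ k = δ⁻¹ ^ k * (δ ^ k * t ^ k) := by
            rw [← mul_assoc, ← mul_pow, inv_mul_cancel₀ (ne_of_gt hδpos), one_pow, one_mul]
          rw [h4]
          calc δ⁻¹ ^ k * (δ ^ k * t ^ k) ≤ δ⁻¹ ^ k * (Real.exp (δ * t) * (k.factorial : ℝ)) :=
                mul_le_mul_of_nonneg_left h2 (by positivity)
            _ = (k.factorial : ℝ) * δ⁻¹ ^ k * Real.exp (δ * t) := by ring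
        calc (((k.factorial : ℝ))⁻¹ * t ^ k) * b k
            ≤ (((k.factorial : ℝ))⁻¹ * ((k.factorial : ℝ) * δ⁻¹ ^ k * Real.exp (δ * t))) * b k := by
              apply mul_le_mul_of_nonneg_right _ (hbnn k)
              exact mul_le_mul_of_nonneg_left htk (by positivity)
          _ = δ⁻¹ ^ k * b k * Real.exp (δ * t) := by
              field_simp
      calc Real.exp (t * μ.re) * ∑ k ∈ Finset.range K, (((k.factorial : ℝ))⁻¹ * t ^ k) * b k
          ≤ Real.exp (t * μ.re) * ((∑ k ∈ Finset.range K, δ⁻¹ ^ k * b k) * Real.exp (δ * t)) := by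
            apply mul_le_mul_of_nonneg_left hsum (Real.exp_pos _).le
        _ ≤ (∑ k ∈ Finset.range K, δ⁻¹ ^ k * b k) * Real.exp (-δ * t) := by
            rw [mul_comm, mul_assoc, ← Real.exp_add]
            apply mul_le_mul_of_nonneg_left _ (Finset.sum_nonneg fun k _ => by positivity)
            rw [Real.exp_le_exp]
            have : t * μ.re ≤ t * (-δ') := by
              apply mul_le_mul_of_nonneg_left hre ht
            rw [hδ] at *
            nlinarith
    · exact ⟨0, le_refl 0, by simp [Matrix.mulVec_zero]⟩
    · rintro x y ⟨C₁, hC₁, h₁⟩ ⟨C₂, hC₂, h₂⟩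
      refine ⟨C₁ + C₂, by positivity, ?_⟩
      intro t ht i
      rw [Matrix.mulVec_add]
      refine le_trans (norm_add_le _ _) ?_
      rw [add_mul]
      exact add_le_add (h₁ t ht i) (h₂ t ht i)
  choose Cs hCs0 hCs using fun j => hkey (Pi.single j 1)
  refine ⟨∑ j, Cs j, δ, hδpos, Finset.sum_nonneg fun j _ => hCs0 j, ?_⟩
  intro t ht i j
  have hmap : (exp (t • W)).map Complex.ofReal = exp (t • Wc) := by
    have h0 : t • Wc = (t • W).map Complex.ofReal := by
      ext i' j'
      simp [hWc, Matrix.map_apply, Complex.real_smul]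
    rw [h0]
    exact map_exp_ofReal _
  have hentry : ((exp (t • Wc)).mulVec (Pi.single j 1)) i = ((exp (t • W)) i j : ℂ) := by
    rw [Matrix.mulVec_single]
    rw [← hmap]
    simp [Matrix.map_apply]
  have := hCs j t ht i
  rw [hentry] at this
  rw [Complex.norm_real, Real.norm_eq_abs] at this
  refine le_trans this ?_
  apply mul_le_mul_of_nonneg_right _ (Real.exp_pos _).le
  exact Finset.single_le_sum (fun j _ => hCs0 j) (Finset.mem_univ j)

end S17

namespace S17
variable {m : ℕ}

lemma fnorm_rpow (M : Matrix (Fin m) (Fin m) ℝ) :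
    fnorm M = (∑ i, ∑ j, ‖M i j‖ ^ (2 : ℝ)) ^ (1/2 : ℝ) := by
  rw [fnorm, Real.sqrt_eq_rpow]
  congr 1
  refine Finset.sum_congr rfl fun i _ => Finset.sum_congr rfl fun j _ => ?_
  rw [Real.norm_eq_abs, show (2:ℝ) = ((2:ℕ):ℝ) by norm_num, Real.rpow_natCast, sq_abs]

lemma fnorm_nonneg (M : Matrix (Fin m) (Fin m) ℝ) : 0 ≤ fnorm M := Real.sqrt_nonneg _

lemma fnorm_mul_le (X Y : Matrix (Fin m) (Fin m) ℝ) : fnorm (X * Y) ≤ fnorm X * fnorm Y := by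
  letI := Matrix.frobeniusNormedAddCommGroup (α := ℝ) (m := Fin m) (n := Fin m)
  rw [fnorm_rpow, fnorm_rpow, fnorm_rpow, ← Matrix.frobenius_norm_def,
    ← Matrix.frobenius_norm_def, ← Matrix.frobenius_norm_def]
  exact Matrix.frobenius_norm_mul X Y

lemma fnorm_sum_le {ι : Type*} (s : Finset ι) (f : ι → Matrix (Fin m) (Fin m) ℝ) :
    fnorm (∑ i ∈ s, f i) ≤ ∑ i ∈ s, fnorm (f i) := by
  letI := Matrix.frobeniusNormedAddCommGroup (α := ℝ) (m := Fin m) (n := Fin m)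
  have key : ∀ M : Matrix (Fin m) (Fin m) ℝ, fnorm M = ‖M‖ := fun M => by
    rw [fnorm_rpow, ← Matrix.frobenius_norm_def]
  simp only [key]
  exact norm_sum_le s f

lemma fnorm_smul (c : ℝ) (M : Matrix (Fin m) (Fin m) ℝ) : fnorm (c • M) = |c| * fnorm M := by
  letI := Matrix.frobeniusNormedAddCommGroup (α := ℝ) (m := Fin m) (n := Fin m)
  letI := Matrix.frobeniusNormedSpace (R := ℝ) (α := ℝ) (m := Fin m) (n := Fin m)
  have key : ∀ M : Matrix (Fin m) (Fin m) ℝ, fnorm M = ‖M‖ := fun M => by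
    rw [fnorm_rpow, ← Matrix.frobenius_norm_def]
  simp only [key]
  rw [norm_smul, Real.norm_eq_abs]

lemma fnorm_entries_le (M : Matrix (Fin m) (Fin m) ℝ) (c : ℝ) (hc : 0 ≤ c)
    (h : ∀ i j, |M i j| ≤ c) : fnorm M ≤ m * c := by
  rw [fnorm]
  have h1 : ∑ i, ∑ j, (M i j) ^ 2 ≤ ((m : ℝ) * c) ^ 2 := by
    have h2 : ∀ i : Fin m, ∑ j, (M i j) ^ 2 ≤ (m : ℝ) * c ^ 2 := by
      intro i
      calc ∑ j, (M i j) ^ 2 ≤ ∑ _j : Fin m, c ^ 2 :=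
            Finset.sum_le_sum fun j _ => by
              rw [← sq_abs]
              exact pow_le_pow_left₀ (abs_nonneg _) (h i j) 2
        _ = (m : ℝ) * c ^ 2 := by simp [Finset.sum_const, Finset.card_univ, mul_comm]
    calc ∑ i, ∑ j, (M i j) ^ 2 ≤ ∑ _i : Fin m, (m : ℝ) * c ^ 2 :=
          Finset.sum_le_sum fun i _ => h2 i
      _ = (m : ℝ) * ((m : ℝ) * c ^ 2) := by simp [Finset.sum_const, Finset.card_univ, mul_comm]
      _ = ((m : ℝ) * c) ^ 2 := by ring
  calc Real.sqrt (∑ i, ∑ j, (M i j) ^ 2) ≤ Real.sqrt (((m : ℝ) * c) ^ 2) :=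
        Real.sqrt_le_sqrt h1
    _ = (m : ℝ) * c := Real.sqrt_sq (by positivity)

lemma pow_le_one_add_pow {t : ℝ} (ht : 0 ≤ t) {k d : ℕ} (hkd : k ≤ d) :
    t ^ k ≤ 1 + t ^ d := by
  rcases le_total t 1 with h | h
  · have h1 : t ^ k ≤ 1 := pow_le_one₀ ht h
    have h2 : (0:ℝ) ≤ t ^ d := pow_nonneg ht d
    linarith
  · have h1 : t ^ k ≤ t ^ d := pow_le_pow_right₀ h hkd
    linarith

lemma poly_id (B P : Matrix (Fin m) (Fin m) ℝ) (ν d : ℕ) (hν : 0 < ν) (hνd : ν ≤ d + 1)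
    (hBP : B ^ ν * P = 0) (t : ℝ) :
    (∑ j ∈ Finset.range (d+1), ((-1:ℝ)^j * t^j / (j.factorial : ℝ)) • B ^ j) *
      (∑ k ∈ Finset.range ν, (((k.factorial : ℝ))⁻¹ * t ^ k) • (B ^ k * P)) = P := by
  classical
  set p : Polynomial ℝ :=
    ∑ j ∈ Finset.range (d+1), Polynomial.C ((-1:ℝ)^j * t^j / (j.factorial : ℝ)) * Polynomial.X ^ j
    with hpdef
  set q : Polynomial ℝ :=
    ∑ k ∈ Finset.range ν, Polynomial.C (((k.factorial : ℝ))⁻¹ * t ^ k) * Polynomial.X ^ k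
    with hqdef
  have hp : Polynomial.aeval B p = ∑ j ∈ Finset.range (d+1),
      ((-1:ℝ)^j * t^j / (j.factorial : ℝ)) • B ^ j := by
    rw [hpdef, map_sum]
    refine Finset.sum_congr rfl fun j _ => ?_
    rw [_root_.map_mul, Polynomial.aeval_C, map_pow, Polynomial.aeval_X, ← Algebra.smul_def]
  have hq : Polynomial.aeval B q = ∑ k ∈ Finset.range ν,
      (((k.factorial : ℝ))⁻¹ * t ^ k) • B ^ k := by
    rw [hqdef, map_sum]
    refine Finset.sum_congr rfl fun k _ => ?_
    rw [_root_.map_mul, Polynomial.aeval_C, map_pow, Polynomial.aeval_X, ← Algebra.smul_def]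
  have hsump : (∑ k ∈ Finset.range ν, (((k.factorial : ℝ))⁻¹ * t ^ k) • (B ^ k * P))
      = (∑ k ∈ Finset.range ν, (((k.factorial : ℝ))⁻¹ * t ^ k) • B ^ k) * P := by
    rw [Finset.sum_mul]
    exact Finset.sum_congr rfl fun k _ => (smul_mul_assoc _ _ _).symm
  have hcp : ∀ j, j ∈ Finset.range (d+1) → p.coeff j = (-1:ℝ)^j * t^j / (j.factorial : ℝ) := by
    intro j hj
    rw [hpdef, Polynomial.finset_sum_coeff]
    rw [Finset.sum_congr rfl (fun k (_ : k ∈ Finset.range (d+1)) => by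
      rw [Polynomial.coeff_C_mul, Polynomial.coeff_X_pow])]
    simp only [mul_ite, mul_one, mul_zero]
    rw [Finset.sum_ite_eq (Finset.range (d+1)) j
      (fun k => (-1:ℝ)^k * t^k / (k.factorial : ℝ))]
    simp [hj]
  have hcq : ∀ k, k ∈ Finset.range ν → q.coeff k = ((k.factorial : ℝ))⁻¹ * t ^ k := by
    intro k hk
    rw [hqdef, Polynomial.finset_sum_coeff]
    rw [Finset.sum_congr rfl (fun l (_ : l ∈ Finset.range ν) => by
      rw [Polynomial.coeff_C_mul, Polynomial.coeff_X_pow])]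
    simp only [mul_ite, mul_one, mul_zero]
    rw [Finset.sum_ite_eq (Finset.range ν) k
      (fun l => ((l.factorial : ℝ))⁻¹ * t ^ l)]
    simp [hk]
  have hdvd : Polynomial.X ^ ν ∣ p * q - 1 := by
    rw [Polynomial.X_pow_dvd_iff]
    intro n hn
    rw [Polynomial.coeff_sub, Polynomial.coeff_mul, Polynomial.coeff_one]
    rw [Finset.Nat.sum_antidiagonal_eq_sum_range_succ_mk]
    have hterm : ∀ j ∈ Finset.range (n+1),
        p.coeff j * q.coeff (n - j)
          = ((-1:ℝ)^j * t^j / (j.factorial : ℝ)) * ((((n-j).factorial : ℝ))⁻¹ * t ^ (n - j)) := by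
      intro j hj
      have hj' : j ≤ n := by simpa using Nat.lt_succ_iff.mp (Finset.mem_range.mp hj)
      rw [hcp j (Finset.mem_range.mpr (by omega)), hcq (n - j) (Finset.mem_range.mpr (by omega))]
    rw [Finset.sum_congr rfl hterm]
    rcases Nat.eq_zero_or_pos n with hn0 | hn0
    · subst hn0
      norm_num
    · rw [if_neg (by omega)]
      rw [sub_zero]
      have halt : ∑ j ∈ Finset.range (n+1), ((-1:ℝ))^j * (n.choose j : ℝ) = 0 := by
        have := Int.alternating_sum_range_choose_of_ne (n := n) (by omega)
        exact_mod_cast this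
      have hstep : ∀ j ∈ Finset.range (n+1),
          ((-1:ℝ)^j * t^j / (j.factorial : ℝ)) * ((((n-j).factorial : ℝ))⁻¹ * t ^ (n - j))
            = (t ^ n / (n.factorial : ℝ)) * (((-1:ℝ))^j * (n.choose j : ℝ)) := by
        intro j hj
        have hj' : j ≤ n := Nat.lt_succ_iff.mp (Finset.mem_range.mp hj)
        have hfact : ((n.choose j : ℝ)) * (j.factorial : ℝ) * (((n-j).factorial : ℝ)) 
            = (n.factorial : ℝ) := by
          exact_mod_cast congrArg (Nat.cast : ℕ → ℝ)
            (Nat.choose_mul_factorial_mul_factorial hj')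
        have htpow : t ^ j * t ^ (n - j) = t ^ n := by
          rw [← pow_add]; congr 1; omega
        have h1 : (j.factorial : ℝ) ≠ 0 := Nat.cast_ne_zero.mpr (Nat.factorial_ne_zero j)
        have h2 : (((n-j).factorial : ℝ)) ≠ 0 := Nat.cast_ne_zero.mpr (Nat.factorial_ne_zero _)
        have h3 : (n.factorial : ℝ) ≠ 0 := Nat.cast_ne_zero.mpr (Nat.factorial_ne_zero n)
        field_simp
        linear_combination (n.factorial:ℝ) * htpow - t^n * hfact
      rw [Finset.sum_congr rfl hstep, ← Finset.mul_sum, halt, mul_zero]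
  obtain ⟨r, hr⟩ := hdvd
  have hpq : p * q = 1 + r * Polynomial.X ^ ν := by
    have := hr
    ring_nf at this ⊢
    linear_combination this
  rw [hsump, ← hp, ← hq, ← mul_assoc, ← _root_.map_mul, hpq, map_add, _root_.map_one,
    _root_.map_mul, map_pow, Polynomial.aeval_X, add_mul, one_mul, mul_assoc, hBP,
    mul_zero, add_zero]

end S17

namespace S17
variable {m : ℕ}

lemma map_mulR (X Y : Matrix (Fin m) (Fin m) ℝ) :
    (X * Y).map Complex.ofReal = X.map Complex.ofReal * Y.map Complex.ofReal := by
  ext i j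
  simp [Matrix.mul_apply, Matrix.map_apply]

lemma map_subR (X Y : Matrix (Fin m) (Fin m) ℝ) :
    (X - Y).map Complex.ofReal = X.map Complex.ofReal - Y.map Complex.ofReal := by
  ext i j
  simp [Matrix.map_apply]

lemma map_smulOneR (s : ℝ) :
    ((s • 1 : Matrix (Fin m) (Fin m) ℝ)).map Complex.ofReal
      = (s : ℂ) • (1 : Matrix (Fin m) (Fin m) ℂ) := by
  ext i j
  by_cases h : i = j <;> simp [Matrix.map_apply, Matrix.one_apply, h]

end S17

end AuxS17

/-- For Perron-like A (principal eigenvalue s, cyclic order ν, spectral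
projection P onto GE_s(A)) and ν − 1 ≤ d ≤ m − 1, with
P(t) = ∑_{k=0}^d (−1)^k (t^k/k!)(A−sI)^k, there are C, δ > 0 such that for every V and t ≥ 0,
‖P(t)e^{t(A−sI)}V − PV‖ ≤ C‖V‖(1 + t^d)e^{−δt}. -/
theorem stmt17 {m : ℕ} (A : Matrix (Fin m) (Fin m) ℝ) (s : ℝ)
    (hs : s ∈ spectrum ℝ A)
    (hperron : ∀ μ ∈ spectrum ℂ (A.map Complex.ofReal), μ ≠ (s : ℂ) → μ.re < s)
    (ν : ℕ) (hν : 0 < ν)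
    (hann : ∀ x ∈ GEsub A s, ((A - s • 1) ^ ν).mulVec x = 0)
    (hmin : ∀ k : ℕ, 0 < k → (∀ x ∈ GEsub A s, ((A - s • 1) ^ k).mulVec x = 0) → ν ≤ k)
    (P : Matrix (Fin m) (Fin m) ℝ)
    (hPidem : P * P = P) (hPcomm : P * A = A * P)
    (hPrange : Set.range P.mulVec = (GEsub A s : Set (Fin m → ℝ)))
    (d : ℕ) (hd1 : ν - 1 ≤ d) (hd2 : d ≤ m - 1) :
    ∃ C : ℝ, 0 < C ∧ ∃ δ : ℝ, 0 < δ ∧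
      ∀ V : Matrix (Fin m) (Fin m) ℝ, ∀ t : ℝ, 0 ≤ t →
        fnorm ((∑ k ∈ Finset.range (d + 1),
              ((-1 : ℝ) ^ k * t ^ k / (Nat.factorial k : ℝ)) • (A - s • 1) ^ k) *
            (mexp (t • (A - s • 1)) * V) - P * V)
          ≤ C * fnorm V * (1 + t ^ d) * Real.exp (-δ * t) := by
  classical
  set B : Matrix (Fin m) (Fin m) ℝ := A - s • 1 with hB
  set Q : Matrix (Fin m) (Fin m) ℝ := 1 - P with hQdef
  have hPB : P * B = B * P := by
    rw [hB, mul_sub, sub_mul, hPcomm, Matrix.mul_smul, Matrix.smul_mul, mul_one, one_mul]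
  have hPfix : ∀ x ∈ GEsub A s, P.mulVec x = x := by
    intro x hx
    have hx' : x ∈ Set.range P.mulVec := by rw [hPrange]; exact hx
    obtain ⟨y, rfl⟩ := hx'
    rw [Matrix.mulVec_mulVec, hPidem]
  have hBP : B ^ ν * P = 0 := by
    have h0 : ∀ x, (B ^ ν * P).mulVec x = 0 := by
      intro x
      rw [← Matrix.mulVec_mulVec]
      apply hann
      have hx' : P *ᵥ x ∈ Set.range P.mulVec := ⟨x, rfl⟩
      rwa [hPrange] at hx'
    ext i j
    have := congr_fun (h0 (Pi.single j 1)) i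
    simpa using this
  have hPQ : P * Q = 0 := by rw [hQdef, mul_sub, mul_one, hPidem, sub_self]
  have hQP : Q * P = 0 := by rw [hQdef, sub_mul, one_mul, hPidem, sub_self]
  have hQB : Q * B = B * Q := by
    rw [hQdef, sub_mul, one_mul, hPB, mul_sub, mul_one]
  have hPBQ : P * (B * Q) = 0 := by rw [← mul_assoc, hPB, mul_assoc, hPQ, mul_zero]
  have hQBP : Q * (B * P) = 0 := by rw [← mul_assoc, hQB, mul_assoc, hQP, mul_zero]
  have hQpow : ∀ k : ℕ, Q * B ^ k = B ^ k * Q := by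
    intro k
    induction k with
    | zero => simp
    | succ n ih => rw [pow_succ, ← mul_assoc, ih, mul_assoc, hQB, ← mul_assoc]
  have hpowBP : ∀ l : ℕ, (B * P) ^ (l + 1) = B ^ (l + 1) * P := by
    intro l
    induction l with
    | zero => simp
    | succ n ih =>
        rw [pow_succ, ih]
        have h1 : B ^ (n+1) * P * (B * P) = B ^ (n+1) * (B * P) := by
          rw [mul_assoc, ← mul_assoc P B P, hPB, mul_assoc, hPidem]
        rw [h1, ← mul_assoc, ← pow_succ]
  set W : Matrix (Fin m) (Fin m) ℝ := B * Q - P with hW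
  have hWr : W = B - B * P - P := by rw [hW, hQdef, mul_sub, mul_one]
  -- spectrum of W
  have hWspec : ∀ μ ∈ spectrum ℂ (W.map Complex.ofReal), μ.re < 0 := by
    intro μ hμ
    have hev : Module.End.HasEigenvalue
        (Matrix.toLinAlgEquiv' (W.map Complex.ofReal) : Module.End ℂ (Fin m → ℂ)) μ := by
      rw [Module.End.hasEigenvalue_iff_mem_spectrum]
      rwa [AlgEquiv.spectrum_eq]
    obtain ⟨z, hz⟩ := hev.exists_hasEigenvector
    have hz0 : z ≠ 0 := hz.2
    have heq : (W.map Complex.ofReal).mulVec z = μ • z := by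
      have h := hz.apply_eq_smul
      rwa [Matrix.toLinAlgEquiv'_apply] at h
    set Pc := P.map Complex.ofReal with hPc
    set Bc := B.map Complex.ofReal with hBc
    have hPW : P * W = -P := by rw [hW, mul_sub, hPBQ, hPidem, zero_sub]
    have hPcW : Pc * W.map Complex.ofReal = -Pc := by
      rw [hPc, ← S17.map_mulR, hPW]
      ext i j
      simp [Matrix.map_apply]
    by_cases hPz : Pc.mulVec z = 0
    · -- z in the kernel of Pc : eigenvector of Bc
      have hBPz : (Bc * Pc).mulVec z = 0 := by
        rw [← Matrix.mulVec_mulVec, hPz, Matrix.mulVec_zero]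
      have hWc : W.map Complex.ofReal = Bc - Bc * Pc - Pc := by
        rw [hWr, S17.map_subR, S17.map_subR, S17.map_mulR, ← hBc, ← hPc]
      have hBz : Bc.mulVec z = μ • z := by
        have h := heq
        rw [hWc, Matrix.sub_mulVec, Matrix.sub_mulVec, hBPz, hPz, sub_zero, sub_zero] at h
        exact h
      by_cases hμ0 : μ = 0
      · -- contradiction : z would lie in the complexified GE_s
        exfalso
        rw [hμ0, zero_smul] at hBz
        set x : Fin m → ℝ := fun i => (z i).re with hx
        set y : Fin m → ℝ := fun i => (z i).im with hy
        have hxz : B.mulVec x = 0 := by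
          funext i
          have h := congr_fun hBz i
          have h2 : (Bc.mulVec z i).re = B.mulVec x i := by
            simp [hBc, hx, Matrix.mulVec, dotProduct, Matrix.map_apply,
              Complex.re_sum, Complex.mul_re]
          rw [← h2, h]
          simp
        have hyz : B.mulVec y = 0 := by
          funext i
          have h := congr_fun hBz i
          have h2 : (Bc.mulVec z i).im = B.mulVec y i := by
            simp [hBc, hy, Matrix.mulVec, dotProduct, Matrix.map_apply,
              Complex.im_sum, Complex.mul_im]
          rw [← h2, h]
          simp
        have hxG : x ∈ GEsub A s := ⟨1, le_refl 1, by rw [pow_one]; exact hxz⟩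
        have hyG : y ∈ GEsub A s := ⟨1, le_refl 1, by rw [pow_one]; exact hyz⟩
        have hPx : P.mulVec x = x := hPfix x hxG
        have hPy : P.mulVec y = y := hPfix y hyG
        have hfix : Pc.mulVec z = z := by
          funext i
          apply Complex.ext
          · have h2 : (Pc.mulVec z i).re = P.mulVec x i := by
              simp [hPc, hx, Matrix.mulVec, dotProduct, Matrix.map_apply,
                Complex.re_sum, Complex.mul_re]
            rw [h2, hPx]
          · have h2 : (Pc.mulVec z i).im = P.mulVec y i := by
              simp [hPc, hy, Matrix.mulVec, dotProduct, Matrix.map_apply,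
                Complex.im_sum, Complex.mul_im]
            rw [h2, hPy]
        exact hz0 (by rw [← hfix, hPz])
      · -- μ + s is an eigenvalue of A
        have hAc : A.map Complex.ofReal = Bc + (s : ℂ) • 1 := by
          have h1 : A = B + s • 1 := by rw [hB, sub_add_cancel]
          have h2 : (B + s • (1 : Matrix (Fin m) (Fin m) ℝ)).map Complex.ofReal
              = Bc + (s : ℂ) • 1 := by
            rw [show B + s • (1 : Matrix (Fin m) (Fin m) ℝ)
                = B - (-(s • 1)) from (sub_neg_eq_add _ _).symm, S17.map_subR]
            have h3 : ((-(s • 1) : Matrix (Fin m) (Fin m) ℝ)).map Complex.ofReal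
                = -((s : ℂ) • 1) := by
              rw [show (-(s • 1) : Matrix (Fin m) (Fin m) ℝ)
                  = (-s) • 1 from by rw [neg_smul], S17.map_smulOneR]
              push_cast
              rw [neg_smul]
            rw [h3, ← hBc, sub_neg_eq_add]
          rw [← h2, ← h1]
        have hAz : (A.map Complex.ofReal).mulVec z = (μ + s) • z := by
          rw [hAc, Matrix.add_mulVec, hBz, Matrix.smul_mulVec, Matrix.one_mulVec,
            add_smul]
        have hAev : (μ + s) ∈ spectrum ℂ (A.map Complex.ofReal) := by
          have h1 : Module.End.HasEigenvalue
              (Matrix.toLinAlgEquiv' (A.map Complex.ofReal) : Module.End ℂ (Fin m → ℂ))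
              (μ + s) := by
            apply Module.End.hasEigenvalue_of_hasEigenvector (x := z)
            refine ⟨Module.End.mem_eigenspace_iff.mpr ?_, hz0⟩
            rw [Matrix.toLinAlgEquiv'_apply]
            exact hAz
          have h2 := h1.mem_spectrum
          rwa [AlgEquiv.spectrum_eq] at h2
        have hne : μ + (s : ℂ) ≠ (s : ℂ) := by
          intro hcon
          apply hμ0
          linear_combination hcon
        have h3 := hperron _ hAev hne
        have h4 : (μ + (s : ℂ)).re = μ.re + s := by simp
        rw [h4] at h3
        linarith
    · -- Pc z ≠ 0 forces μ = -1
      have h1 : μ • Pc.mulVec z = -(Pc.mulVec z) := by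
        have h2 : Pc.mulVec ((W.map Complex.ofReal).mulVec z)
            = (Pc * W.map Complex.ofReal).mulVec z := Matrix.mulVec_mulVec _ _ _
        rw [heq, hPcW, Matrix.mulVec_smul, Matrix.neg_mulVec] at h2
        exact h2
      have h3 : (μ + 1) • Pc.mulVec z = 0 := by
        rw [add_smul, one_smul, h1, neg_add_cancel]
      have h4 : μ + 1 = 0 := by
        rcases smul_eq_zero.mp h3 with h | h
        · exact h
        · exact absurd h hPz
      have h5 : μ = -1 := eq_neg_of_add_eq_zero_left h4
      rw [h5]
      norm_num
  obtain ⟨C2, δ, hδpos, hC2nn, hC2⟩ := S17.decay W hWspec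
  -- exponential splitting
  have hsum : ∀ t : ℝ, t • B = t • (B * Q) + t • (B * P) := by
    intro t
    rw [← smul_add, ← mul_add, hQdef, sub_add_cancel, mul_one]
  have hcommQP : Commute (B * Q) (B * P) := by
    show B * Q * (B * P) = B * P * (B * Q)
    calc B * Q * (B * P) = B * (Q * (B * P)) := by rw [mul_assoc]
      _ = 0 := by rw [hQBP, mul_zero]
      _ = B * (P * (B * Q)) := by rw [hPBQ, mul_zero]
      _ = B * P * (B * Q) := by rw [mul_assoc]
  have hcomm : ∀ t : ℝ, Commute (t • (B * Q)) (t • (B * P)) := fun t =>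
    (hcommQP.smul_right t).smul_left t
  have hexpP : ∀ t : ℝ, NormedSpace.exp (t • B) * P
      = ∑ k ∈ Finset.range ν, (((k.factorial : ℝ))⁻¹ * t ^ k) • (B ^ k * P) := by
    intro t
    rw [hsum t, Matrix.exp_add_of_commute _ _ (hcomm t), mul_assoc]
    have hnil : (t • (B * P)) ^ ν = 0 := by
      rw [smul_pow]
      obtain ⟨l, hl⟩ : ∃ l, ν = l + 1 := ⟨ν - 1, by omega⟩
      rw [hl, hpowBP l, ← hl, hBP, smul_zero]
    rw [S17.exp_nilp _ ν hnil, Finset.sum_mul]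
    have hterm : ∀ k ∈ Finset.range ν,
        (((k.factorial : ℝ))⁻¹ • (t • (B * P)) ^ k) * P
          = (((k.factorial : ℝ))⁻¹ * t ^ k) • (B ^ k * P) := by
      intro k _
      rw [smul_pow, smul_mul_assoc, smul_mul_assoc, smul_smul]
      congr 1
      rcases Nat.eq_zero_or_pos k with h0 | h0
      · subst h0; simp
      · obtain ⟨l, rfl⟩ : ∃ l, k = l + 1 := ⟨k - 1, by omega⟩
        rw [hpowBP l, mul_assoc, hPidem]
    rw [Finset.sum_congr rfl hterm, Finset.mul_sum]
    refine Finset.sum_congr rfl fun k _ => ?_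
    rw [mul_smul_comm]
    congr 1
    apply S17.exp_mul_right
    have h1 : B * Q * (B ^ k * P) = 0 := by
      rw [mul_assoc B Q, ← mul_assoc Q, hQpow k, mul_assoc, hQP, mul_zero, mul_zero]
    rw [smul_mul_assoc, h1, smul_zero]
  have hexpQ : ∀ t : ℝ, NormedSpace.exp (t • B) * Q = NormedSpace.exp (t • W) * Q := by
    intro t
    have h1 : NormedSpace.exp (t • B) * Q = NormedSpace.exp (t • (B * Q)) * Q := by
      rw [hsum t, Matrix.exp_add_of_commute _ _ (hcomm t), mul_assoc]
      congr 1
      apply S17.exp_mul_right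
      rw [smul_mul_assoc, mul_assoc, hPQ, mul_zero, smul_zero]
    have h2 : t • W = t • (B * Q) + -(t • P) := by
      rw [hW, smul_sub, sub_eq_add_neg]
    have hcomm2 : Commute (t • (B * Q)) (-(t • P)) := by
      apply Commute.neg_right
      apply Commute.smul_left
      apply Commute.smul_right
      show B * Q * P = P * (B * Q)
      rw [mul_assoc, hQP, mul_zero, hPBQ]
    have h3 : NormedSpace.exp (-(t • P)) * Q = Q := by
      apply S17.exp_mul_right
      rw [neg_mul, smul_mul_assoc, hPQ, smul_zero, neg_zero]
    rw [h1, h2, Matrix.exp_add_of_commute _ _ hcomm2, mul_assoc, h3]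
  -- constants
  set K1 : ℝ := ∑ k ∈ Finset.range (d + 1), ((k.factorial : ℝ))⁻¹ * fnorm (B ^ k) with hK1
  have hK1nn : 0 ≤ K1 :=
    Finset.sum_nonneg fun k _ => mul_nonneg (by positivity) (S17.fnorm_nonneg _)
  have hQnn : 0 ≤ fnorm Q := S17.fnorm_nonneg _
  refine ⟨(m : ℝ) * C2 * K1 * fnorm Q + 1, ?_, δ, hδpos, ?_⟩
  · have h1 : 0 ≤ (m : ℝ) * C2 * K1 * fnorm Q := by
      apply mul_nonneg
      apply mul_nonneg
      apply mul_nonneg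
      · positivity
      · exact hC2nn
      · exact hK1nn
      · exact hQnn
    linarith
  intro V t ht
  have hVnn : 0 ≤ fnorm V := S17.fnorm_nonneg _
  have htd : (0:ℝ) ≤ t ^ d := pow_nonneg ht d
  -- identify the matrix
  set Pt : Matrix (Fin m) (Fin m) ℝ :=
    ∑ k ∈ Finset.range (d + 1), ((-1 : ℝ) ^ k * t ^ k / (Nat.factorial k : ℝ)) • B ^ k
    with hPt
  have hmexp : mexp (t • B) = NormedSpace.exp (t • B) := rfl
  have hident : Pt * (mexp (t • B) * V) - P * V
      = (Pt * (NormedSpace.exp (t • W) * Q)) * V := by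
    rw [hmexp]
    have e3 : Pt * (NormedSpace.exp (t • B) * P) = P := by
      rw [hexpP t, hPt]
      exact S17.poly_id B P ν d hν (by omega) hBP t
    have e2 : Pt * NormedSpace.exp (t • B)
        = Pt * (NormedSpace.exp (t • B) * P) + Pt * (NormedSpace.exp (t • B) * Q) := by
      rw [← mul_add, ← mul_add, hQdef, add_sub_cancel, mul_one]
    calc Pt * (NormedSpace.exp (t • B) * V) - P * V
        = (Pt * NormedSpace.exp (t • B)) * V - P * V := by rw [mul_assoc]
      _ = (P + Pt * (NormedSpace.exp (t • W) * Q)) * V - P * V := by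
          rw [e2, e3, hexpQ t]
      _ = (Pt * (NormedSpace.exp (t • W) * Q)) * V := by
          rw [add_mul, add_sub_cancel_left]
  rw [hident]
  -- estimates
  have hPtb : fnorm Pt ≤ (1 + t ^ d) * K1 := by
    refine le_trans (S17.fnorm_sum_le _ _) ?_
    rw [hK1, Finset.mul_sum]
    apply Finset.sum_le_sum
    intro k hk
    rw [S17.fnorm_smul]
    have habs : |(-1 : ℝ) ^ k * t ^ k / (Nat.factorial k : ℝ)|
        = t ^ k / (k.factorial : ℝ) := by
      rw [abs_div, abs_mul, abs_pow, abs_neg, abs_one, one_pow, one_mul,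
        abs_of_nonneg (pow_nonneg ht k), Nat.abs_cast]
    rw [habs]
    have h1 : t ^ k ≤ 1 + t ^ d :=
      S17.pow_le_one_add_pow ht (Nat.lt_succ_iff.mp (Finset.mem_range.mp hk))
    have h2 : 0 ≤ fnorm (B ^ k) := S17.fnorm_nonneg _
    calc t ^ k / (k.factorial : ℝ) * fnorm (B ^ k)
        = t ^ k * (((k.factorial : ℝ))⁻¹ * fnorm (B ^ k)) := by ring
      _ ≤ (1 + t ^ d) * (((k.factorial : ℝ))⁻¹ * fnorm (B ^ k)) := by
          apply mul_le_mul_of_nonneg_right h1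
          positivity
  have hexpb : fnorm (NormedSpace.exp (t • W)) ≤ (m : ℝ) * (C2 * Real.exp (-δ * t)) := by
    apply S17.fnorm_entries_le
    · exact mul_nonneg hC2nn (Real.exp_pos _).le
    · exact hC2 t ht
  have hexpnn : 0 ≤ fnorm (NormedSpace.exp (t • W)) := S17.fnorm_nonneg _
  have chain : fnorm ((Pt * (NormedSpace.exp (t • W) * Q)) * V)
      ≤ fnorm Pt * (fnorm (NormedSpace.exp (t • W)) * fnorm Q) * fnorm V := by
    calc fnorm ((Pt * (NormedSpace.exp (t • W) * Q)) * V)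
        ≤ fnorm (Pt * (NormedSpace.exp (t • W) * Q)) * fnorm V := S17.fnorm_mul_le _ _
      _ ≤ (fnorm Pt * fnorm (NormedSpace.exp (t • W) * Q)) * fnorm V :=
          mul_le_mul_of_nonneg_right (S17.fnorm_mul_le _ _) hVnn
      _ ≤ fnorm Pt * (fnorm (NormedSpace.exp (t • W)) * fnorm Q) * fnorm V := by
          apply mul_le_mul_of_nonneg_right _ hVnn
          apply mul_le_mul_of_nonneg_left (S17.fnorm_mul_le _ _) (S17.fnorm_nonneg _)
  refine le_trans chain ?_
  have step : fnorm Pt * (fnorm (NormedSpace.exp (t • W)) * fnorm Q) * fnorm V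
      ≤ ((1 + t ^ d) * K1) * (((m : ℝ) * (C2 * Real.exp (-δ * t))) * fnorm Q) * fnorm V := by
    apply mul_le_mul_of_nonneg_right _ hVnn
    apply mul_le_mul hPtb
    · exact mul_le_mul_of_nonneg_right hexpb hQnn
    · exact mul_nonneg hexpnn hQnn
    · exact mul_nonneg (by linarith) hK1nn
  refine le_trans step ?_
  have hfin : ((1 + t ^ d) * K1) * (((m : ℝ) * (C2 * Real.exp (-δ * t))) * fnorm Q) * fnorm V
      = ((m : ℝ) * C2 * K1 * fnorm Q) * fnorm V * (1 + t ^ d) * Real.exp (-δ * t) := by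
    ring
  rw [hfin]
  have hle : (m : ℝ) * C2 * K1 * fnorm Q ≤ (m : ℝ) * C2 * K1 * fnorm Q + 1 := by linarith
  apply mul_le_mul_of_nonneg_right _ (Real.exp_pos _).le
  apply mul_le_mul_of_nonneg_right _ (by linarith : (0:ℝ) ≤ 1 + t ^ d)
  exact mul_le_mul_of_nonneg_right hle hVnn
end
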